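/- arXiv:0910.4995 — 9 statements merged into one kernel-verified Lean document; each statement's English description precedes it below -/
import Mathlib

section
/- Let X be a solution of the inviscid dyadic model on [0,T). If X satisfies the weak energy inequality (E(t) ≤ E(0) for all t ∈ [0,T)), then X satisfies the strong energy inequality (E(t) ≤ E(s) for all 0 ≤ s < t < T). Consequently, a solution satisfies the weak energy inequality if and only if it satisfies the strong energy inequality. -/
open MeasureTheory Set Filter Topology

/-- `X` is a solution of the inviscid dyadic model on the time set `D`
(typically `Set.Ico 0 T` or `Set.Ici 0`), with coefficients `k` bounded by `C * 2 ^ n`.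
The components of the solution are `X 1, X 2, ...`; by convention `X 0 ≡ 0` and `k 0 = 0`. -/
def IsDyadicSolutionOn (C : ℝ) (k : ℕ → ℝ) (X : ℕ → ℝ → ℝ) (D : Set ℝ) : Prop :=
  0 < C ∧ k 0 = 0 ∧
  (∀ n : ℕ, 1 ≤ n → 0 ≤ k n ∧ k n ≤ C * 2 ^ n) ∧
  (∀ t : ℝ, X 0 t = 0) ∧
  (∀ n : ℕ, 1 ≤ n → ∀ t ∈ D, HasDerivWithinAt (X n)
      (k (n - 1) * X (n - 1) t ^ 2 - k n * X n t * X (n + 1) t) D t) ∧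
  (∀ t ∈ D, Summable fun j : ℕ => X (j + 1) t ^ 2)

/-- The energy `E(t) = ∑_{j ≥ 1} X_j(t)^2`. -/
noncomputable def energy (X : ℕ → ℝ → ℝ) (t : ℝ) : ℝ :=
  ∑' j : ℕ, X (j + 1) t ^ 2

/-- The function `a(t) = sup_{n ≥ 1} (- k_n X_{n+1}(t))`. -/
noncomputable def classKfun (k : ℕ → ℝ) (X : ℕ → ℝ → ℝ) (t : ℝ) : ℝ :=
  ⨆ n : ℕ, -(k (n + 1) * X (n + 2) t)

/-- A solution is of class `K` if `a(t) = sup_{n ≥ 1} (- k_n X_{n+1}(t))` is locally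
integrable on `[0,∞)`. -/
def IsClassK (k : ℕ → ℝ) (X : ℕ → ℝ → ℝ) : Prop :=
  LocallyIntegrableOn (classKfun k X) (Set.Ici 0)

section Aux

variable {T : ℝ}

/-- Monotonicity from a nonnegative derivative on the interior, for functions with a
derivative within `Ico 0 T`. -/
private lemma monoAux {f f' : ℝ → ℝ}
    (hf : ∀ r ∈ Set.Ico (0 : ℝ) T, HasDerivWithinAt f (f' r) (Set.Ico (0 : ℝ) T) r)
    {a b : ℝ} (ha : 0 ≤ a) (hb : b < T)
    (hsign : ∀ r ∈ Set.Ioo a b, 0 ≤ f' r) :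
    MonotoneOn f (Set.Icc a b) := by
  have hsub : Set.Icc a b ⊆ Set.Ico (0 : ℝ) T :=
    fun r hr => ⟨ha.trans hr.1, lt_of_le_of_lt hr.2 hb⟩
  have hDA : ∀ x ∈ Set.Ioo a b, HasDerivAt f (f' x) x := by
    intro x hx
    refine (hf x (hsub ⟨hx.1.le, hx.2.le⟩)).hasDerivAt ?_
    exact Filter.mem_of_superset
      (Ioo_mem_nhds (ha.trans_lt hx.1) (hx.2.trans hb))
      (fun r hr => ⟨hr.1.le, hr.2⟩)
  refine monotoneOn_of_deriv_nonneg (convex_Icc a b)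
    (fun r hr => ((hf r (hsub hr)).continuousWithinAt).mono hsub) ?_ ?_
  · intro x hx
    rw [interior_Icc] at hx
    exact ((hDA x hx).differentiableAt).differentiableWithinAt
  · intro x hx
    rw [interior_Icc] at hx
    rw [(hDA x hx).deriv]
    exact hsign x hx

private lemma antiAux {f f' : ℝ → ℝ}
    (hf : ∀ r ∈ Set.Ico (0 : ℝ) T, HasDerivWithinAt f (f' r) (Set.Ico (0 : ℝ) T) r)
    {a b : ℝ} (ha : 0 ≤ a) (hb : b < T)
    (hsign : ∀ r ∈ Set.Ioo a b, f' r ≤ 0) :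
    AntitoneOn f (Set.Icc a b) := by
  have := monoAux (f := fun r => -f r) (f' := fun r => -(f' r))
    (fun r hr => (hf r hr).neg) ha hb
    (fun r hr => neg_nonneg.mpr (hsign r hr))
  intro x hx y hy hxy
  have := this hx hy hxy
  simpa using this

end Aux

/-- the weak energy inequality implies the strong energy inequality;
consequently the two are equivalent. -/
theorem weak_energy_iff_strong_energy
    (C : ℝ) (k : ℕ → ℝ) (X : ℕ → ℝ → ℝ) (T : ℝ)
    (hX : IsDyadicSolutionOn C k X (Set.Ico 0 T)) :
    ((∀ t ∈ Set.Ico (0 : ℝ) T, energy X t ≤ energy X 0) →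
      ∀ s ∈ Set.Ico (0 : ℝ) T, ∀ t ∈ Set.Ico (0 : ℝ) T, s < t →
        energy X t ≤ energy X s) ∧
    ((∀ t ∈ Set.Ico (0 : ℝ) T, energy X t ≤ energy X 0) ↔
      (∀ s ∈ Set.Ico (0 : ℝ) T, ∀ t ∈ Set.Ico (0 : ℝ) T, s < t →
        energy X t ≤ energy X s)) := by
  obtain ⟨hC, hk0, hkb, hX0, hODE, hsum⟩ := hX
  -- nonnegativity of the coefficients
  have hknn : ∀ n, 0 ≤ k n := by
    intro n
    cases n with
    | zero => rw [hk0]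
    | succ m => exact (hkb (m + 1) (Nat.le_add_left 1 m)).1
  -- continuity of all the components on `Ico 0 T`
  have hcont : ∀ n, ContinuousOn (X n) (Set.Ico (0 : ℝ) T) := by
    intro n
    cases n with
    | zero =>
      exact continuousOn_const.congr (fun r _ => hX0 r)
    | succ m =>
      exact fun r hr =>
        (hODE (m + 1) (Nat.le_add_left 1 m) r hr).continuousWithinAt
  -- sign persistence of components: once nonnegative, always nonnegative
  have persist : ∀ m : ℕ, 1 ≤ m → ∀ a b : ℝ, 0 ≤ a → a ≤ b → b < T →
      0 ≤ X m a → 0 ≤ X m b := by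
    intro m hm a b ha hab hbT hXa
    by_contra hneg
    push_neg at hneg
    have habD : Set.Icc a b ⊆ Set.Ico (0 : ℝ) T :=
      fun r hr => ⟨ha.trans hr.1, lt_of_le_of_lt hr.2 hbT⟩
    set S : Set ℝ := Set.Icc a b ∩ X m ⁻¹' Set.Ici 0 with hSdef
    have hSne : S.Nonempty := ⟨a, ⟨le_rfl, hab⟩, hXa⟩
    have hSsub : S ⊆ Set.Icc a b := fun r hr => hr.1
    have hSbdd : BddAbove S := BddAbove.mono hSsub bddAbove_Icc
    have hSclosed : IsClosed S :=
      ((hcont m).mono habD).preimage_isClosed_of_isClosed isClosed_Icc isClosed_Ici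
    set σ := sSup S with hσdef
    have hσS : σ ∈ S := hSclosed.csSup_mem hSne hSbdd
    have hσIcc : σ ∈ Set.Icc a b := hσS.1
    have hXσ : 0 ≤ X m σ := hσS.2
    have hσb : σ < b := by
      rcases lt_or_eq_of_le hσIcc.2 with h | h
      · exact h
      · exact absurd (h ▸ hXσ) (not_le.mpr hneg)
    -- beyond σ the component is negative
    have hIocneg : ∀ r ∈ Set.Ioc σ b, X m r < 0 := by
      intro r hr
      by_contra h
      push_neg at h
      have hrS : r ∈ S := ⟨⟨hσIcc.1.trans hr.1.le, hr.2⟩, h⟩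
      exact absurd (le_csSup hSbdd hrS) (not_le.mpr hr.1)
    have hXσ0 : X m σ ≤ 0 := by
      have hsub2 : Set.Ioc σ b ⊆ Set.Ico (0 : ℝ) T :=
        fun r hr => habD ⟨hσIcc.1.trans hr.1.le, hr.2⟩
      have hne : (𝓝[Set.Ioc σ b] σ).NeBot := by
        rw [← mem_closure_iff_nhdsWithin_neBot, closure_Ioc hσb.ne]
        exact ⟨le_rfl, hσb.le⟩
      have htd : Filter.Tendsto (X m) (𝓝[Set.Ioc σ b] σ) (𝓝 (X m σ)) :=
        ((hcont m) σ (habD hσIcc)).mono_left (nhdsWithin_mono σ hsub2)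
      exact le_of_tendsto htd
        (Filter.eventually_of_mem self_mem_nhdsWithin
          (fun r hr => (hIocneg r hr).le))
    have hXmσ : X m σ = 0 := le_antisymm hXσ0 hXσ
    have hIccle : ∀ r ∈ Set.Icc σ b, X m r ≤ 0 := by
      intro r hr
      rcases eq_or_lt_of_le hr.1 with h | h
      · rw [← h, hXmσ]
      · exact (hIocneg r ⟨h, hr.2⟩).le
    -- a bound for `k m * X (m+1)` on `[σ, b]`
    have hsubσb : Set.Icc σ b ⊆ Set.Ico (0 : ℝ) T :=
      fun r hr => habD ⟨hσIcc.1.trans hr.1, hr.2⟩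
    obtain ⟨K, hK⟩ := (isCompact_Icc (a := σ) (b := b)).exists_bound_of_continuousOn
      (continuousOn_const.mul ((hcont (m + 1)).mono hsubσb))
    -- the auxiliary function `g r = X m r * exp (-(K r))` is monotone on `[σ, b]`
    set g : ℝ → ℝ := fun r => X m r * Real.exp (-(K * r)) with hgdef
    set g' : ℝ → ℝ := fun r =>
      (k (m - 1) * X (m - 1) r ^ 2 - k m * X m r * X (m + 1) r) * Real.exp (-(K * r)) +
        X m r * (Real.exp (-(K * r)) * -(K * 1)) with hg'def
    have hg : ∀ r ∈ Set.Ico (0 : ℝ) T, HasDerivWithinAt g (g' r) (Set.Ico (0 : ℝ) T) r := by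
      intro r hr
      have hexp : HasDerivAt (fun y : ℝ => Real.exp (-(K * y)))
          (Real.exp (-(K * r)) * -(K * 1)) r :=
        (((hasDerivAt_id r).const_mul K).neg).exp
      exact (hODE m hm r hr).mul hexp.hasDerivWithinAt
    have hmono : MonotoneOn g (Set.Icc σ b) := by
      refine monoAux hg (ha.trans hσIcc.1) hbT ?_
      intro r hr
      have hrIcc : r ∈ Set.Icc σ b := ⟨hr.1.le, hr.2.le⟩
      have hXr : X m r ≤ 0 := hIccle r hrIcc
      have hKr := hK r hrIcc
      rw [Real.norm_eq_abs] at hKr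
      have hlow : -K ≤ k m * X (m + 1) r := neg_le_of_abs_le hKr
      have hE : 0 < Real.exp (-(K * r)) := Real.exp_pos _
      have e1 : 0 ≤ k (m - 1) * X (m - 1) r ^ 2 := mul_nonneg (hknn _) (sq_nonneg _)
      have hprod : 0 ≤ (-(X m r)) * (k m * X (m + 1) r + K) :=
        mul_nonneg (neg_nonneg.mpr hXr) (by linarith)
      show 0 ≤ (k (m - 1) * X (m - 1) r ^ 2 - k m * X m r * X (m + 1) r) *
          Real.exp (-(K * r)) + X m r * (Real.exp (-(K * r)) * -(K * 1))
      nlinarith [mul_nonneg hprod hE.le, mul_nonneg e1 hE.le]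
    have h2 : g σ ≤ g b :=
      hmono ⟨le_rfl, hσb.le⟩ ⟨hσb.le, le_rfl⟩ hσb.le
    have hgσ : g σ = 0 := by simp [hgdef, hXmσ]
    have hgb : g b < 0 := mul_neg_of_neg_of_pos hneg (Real.exp_pos _)
    linarith
  -- derivative of the partial energies
  have hENderiv : ∀ N : ℕ, ∀ r ∈ Set.Ico (0 : ℝ) T,
      HasDerivWithinAt (fun r' => ∑ j ∈ Finset.range N, X (j + 1) r' ^ 2)
        (-(2 * (k N * X N r ^ 2 * X (N + 1) r))) (Set.Ico (0 : ℝ) T) r := by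
    intro N r hr
    have h1 : HasDerivWithinAt (fun r' => ∑ j ∈ Finset.range N, X (j + 1) r' ^ 2)
        (∑ j ∈ Finset.range N,
          (2 * (k j * X j r ^ 2 * X (j + 1) r) -
            2 * (k (j + 1) * X (j + 1) r ^ 2 * X (j + 1 + 1) r)))
        (Set.Ico (0 : ℝ) T) r := by
      apply HasDerivWithinAt.fun_sum
      intro j _
      have h2 := hODE (j + 1) (Nat.le_add_left 1 j) r hr
      simp only [Nat.add_sub_cancel] at h2
      have h3 := h2.fun_pow 2
      convert h3 using 1
      norm_num
      rfl
      push_cast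
      ring
    have h4 : (∑ j ∈ Finset.range N,
        (2 * (k j * X j r ^ 2 * X (j + 1) r) -
          2 * (k (j + 1) * X (j + 1) r ^ 2 * X (j + 1 + 1) r)))
        = -(2 * (k N * X N r ^ 2 * X (N + 1) r)) := by
      rw [Finset.sum_range_sub' (f := fun j => 2 * (k j * X j r ^ 2 * X (j + 1) r)) N]
      rw [hk0]
      ring
    exact h4 ▸ h1
  -- the key step: weak implies strong
  have main : (∀ t ∈ Set.Ico (0 : ℝ) T, energy X t ≤ energy X 0) →
      ∀ s ∈ Set.Ico (0 : ℝ) T, ∀ t ∈ Set.Ico (0 : ℝ) T, s < t →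
        energy X t ≤ energy X s := by
    intro hweak s hs t ht hst
    have hT : (0 : ℝ) < T := lt_of_le_of_lt ht.1 ht.2
    have h0D : (0 : ℝ) ∈ Set.Ico (0 : ℝ) T := ⟨le_rfl, hT⟩
    have hEN_le : ∀ v ∈ Set.Ico (0 : ℝ) T, ∀ N : ℕ,
        (∑ j ∈ Finset.range N, X (j + 1) v ^ 2) ≤ energy X v := fun v hv N =>
      Summable.sum_le_tsum (Finset.range N) (fun i _ => sq_nonneg _) (hsum v hv)
    have key : ∀ N : ℕ, (∑ j ∈ Finset.range N, X (j + 1) t ^ 2) ≤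
        (∑ j ∈ Finset.range N, X (j + 1) s ^ 2) +
          (energy X 0 - ∑ j ∈ Finset.range N, X (j + 1) 0 ^ 2) := by
      intro N
      by_cases hsgn : 0 ≤ X (N + 1) s
      · -- `X (N+1)` remains nonnegative on `[s, t]`, partial energy decreases
        have hanti : AntitoneOn (fun r => ∑ j ∈ Finset.range N, X (j + 1) r ^ 2)
            (Set.Icc s t) := by
          refine antiAux (hENderiv N) hs.1 ht.2 ?_
          intro r hr
          have hXr : 0 ≤ X (N + 1) r :=
            persist (N + 1) (Nat.le_add_left 1 N) s r hs.1 hr.1.le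
              (hr.2.trans ht.2) hsgn
          have : 0 ≤ 2 * (k N * X N r ^ 2 * X (N + 1) r) := by
            have := mul_nonneg (mul_nonneg (hknn N) (sq_nonneg (X N r))) hXr
            linarith
          linarith
        have h1 := hanti ⟨le_rfl, hst.le⟩ ⟨hst.le, le_rfl⟩ hst.le
        have h2 : (∑ j ∈ Finset.range N, X (j + 1) 0 ^ 2) ≤ energy X 0 :=
          hEN_le 0 h0D N
        linarith
      · push_neg at hsgn
        -- `X (N+1)` is negative on `[0, σ)` and nonnegative on `(σ, t]`
        set A : Set ℝ := {r ∈ Set.Icc s t | X (N + 1) r < 0} with hAdef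
        have hsA : s ∈ A := ⟨⟨le_rfl, hst.le⟩, hsgn⟩
        have hAne : A.Nonempty := ⟨s, hsA⟩
        have hAbdd : BddAbove A := BddAbove.mono (fun r hr => hr.1) bddAbove_Icc
        set σ := sSup A with hσdef
        have hsσ : s ≤ σ := le_csSup hAbdd hsA
        have hσt : σ ≤ t := csSup_le hAne (fun r hr => hr.1.2)
        have hneg_low : ∀ r ∈ Set.Ioo (0 : ℝ) σ, X (N + 1) r ≤ 0 := by
          intro r hr
          obtain ⟨a, haA, hra⟩ := exists_lt_of_lt_csSup hAne hr.2
          by_contra h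
          push_neg at h
          have : 0 ≤ X (N + 1) a :=
            persist (N + 1) (Nat.le_add_left 1 N) r a hr.1.le hra.le
              (lt_of_le_of_lt haA.1.2 ht.2) h.le
          exact absurd this (not_le.mpr haA.2)
        have hpos_high : ∀ r ∈ Set.Ioo σ t, 0 ≤ X (N + 1) r := by
          intro r hr
          by_contra h
          push_neg at h
          have hrA : r ∈ A := ⟨⟨hsσ.trans hr.1.le, hr.2.le⟩, h⟩
          exact absurd (le_csSup hAbdd hrA) (not_le.mpr hr.1)
        have hmono : MonotoneOn (fun r => ∑ j ∈ Finset.range N, X (j + 1) r ^ 2)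
            (Set.Icc 0 σ) := by
          refine monoAux (hENderiv N) le_rfl (lt_of_le_of_lt hσt ht.2) ?_
          intro r hr
          have hXr : X (N + 1) r ≤ 0 := hneg_low r hr
          have : 0 ≤ 2 * (k N * X N r ^ 2 * (-(X (N + 1) r))) := by
            have := mul_nonneg (mul_nonneg (hknn N) (sq_nonneg (X N r)))
              (neg_nonneg.mpr hXr)
            linarith
          linarith
        have hanti : AntitoneOn (fun r => ∑ j ∈ Finset.range N, X (j + 1) r ^ 2)
            (Set.Icc σ t) := by
          refine antiAux (hENderiv N) (hs.1.trans hsσ) ht.2 ?_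
          intro r hr
          have hXr : 0 ≤ X (N + 1) r := hpos_high r hr
          have : 0 ≤ 2 * (k N * X N r ^ 2 * X (N + 1) r) := by
            have := mul_nonneg (mul_nonneg (hknn N) (sq_nonneg (X N r))) hXr
            linarith
          linarith
        have h1 : (∑ j ∈ Finset.range N, X (j + 1) 0 ^ 2) ≤
            (∑ j ∈ Finset.range N, X (j + 1) s ^ 2) :=
          hmono ⟨le_rfl, hs.1.trans hsσ⟩ ⟨hs.1, hsσ⟩ hs.1
        have h2 : (∑ j ∈ Finset.range N, X (j + 1) t ^ 2) ≤
            (∑ j ∈ Finset.range N, X (j + 1) σ ^ 2) :=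
          hanti ⟨le_rfl, hσt⟩ ⟨hσt, le_rfl⟩ hσt
        have h3 : (∑ j ∈ Finset.range N, X (j + 1) σ ^ 2) ≤ energy X σ :=
          hEN_le σ ⟨hs.1.trans hsσ, lt_of_le_of_lt hσt ht.2⟩ N
        have h4 : energy X σ ≤ energy X 0 :=
          hweak σ ⟨hs.1.trans hsσ, lt_of_le_of_lt hσt ht.2⟩
        linarith
    -- pass to the limit `N → ∞`
    have limt : Filter.Tendsto (fun N => ∑ j ∈ Finset.range N, X (j + 1) t ^ 2)
        Filter.atTop (𝓝 (energy X t)) := (hsum t ht).hasSum.tendsto_sum_nat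
    have lims : Filter.Tendsto (fun N => ∑ j ∈ Finset.range N, X (j + 1) s ^ 2)
        Filter.atTop (𝓝 (energy X s)) := (hsum s hs).hasSum.tendsto_sum_nat
    have lim0 : Filter.Tendsto (fun N => ∑ j ∈ Finset.range N, X (j + 1) 0 ^ 2)
        Filter.atTop (𝓝 (energy X 0)) := (hsum 0 h0D).hasSum.tendsto_sum_nat
    have limrhs : Filter.Tendsto (fun N => (∑ j ∈ Finset.range N, X (j + 1) s ^ 2) +
        (energy X 0 - ∑ j ∈ Finset.range N, X (j + 1) 0 ^ 2)) Filter.atTop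
        (𝓝 (energy X s + (energy X 0 - energy X 0))) :=
      lims.add (tendsto_const_nhds.sub lim0)
    rw [sub_self, add_zero] at limrhs
    exact le_of_tendsto_of_tendsto' limt limrhs key
  refine ⟨main, ⟨main, ?_⟩⟩
  intro hstrong u hu
  rcases eq_or_lt_of_le hu.1 with h | h
  · rw [← h]
  · exact hstrong 0 ⟨le_rfl, lt_trans h hu.2⟩ u hu h
end

section
/- Let x ∈ l^2 have x_n ≥ 0 for all n. Then there exists exactly one global solution X of the inviscid dyadic model with X(0) = x, and this solution is a Leray-Hopf solution, i.e. E(t) ≤ E(s) for all 0 ≤ s < t. -/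
open MeasureTheory Set Filter Topology

namespace DyadicAux


variable {E' : Type*} [NormedAddCommGroup E'] [NormedSpace ℝ E']

/-- Radial retraction onto the closed ball of radius `ρ`. -/
noncomputable def ret (ρ : ℝ) (v : E') : E' :=
  if ‖v‖ ≤ ρ then v else (ρ * ‖v‖⁻¹) • v

lemma ret_eq_self {ρ : ℝ} {v : E'} (h : ‖v‖ ≤ ρ) : ret ρ v = v := if_pos h

lemma ret_eq_smul (ρ : ℝ) (v : E') : ∃ c : ℝ, ret ρ v = c • v := by
  unfold ret
  split_ifs with h
  · exact ⟨1, (one_smul ℝ v).symm⟩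
  · exact ⟨ρ * ‖v‖⁻¹, rfl⟩

lemma ret_norm_le {ρ : ℝ} (hρ : 0 ≤ ρ) (v : E') : ‖ret ρ v‖ ≤ ρ := by
  unfold ret
  split_ifs with h
  · exact h
  · push_neg at h
    have hv : 0 < ‖v‖ := lt_of_le_of_lt hρ h
    rw [norm_smul, Real.norm_eq_abs, abs_of_nonneg (by positivity)]
    rw [mul_assoc, inv_mul_cancel₀ (ne_of_gt hv), mul_one]

lemma ret_lipschitz_aux {ρ : ℝ} (hρ : 0 ≤ ρ) {v w : E'} (hv : ‖v‖ ≤ ρ) (hw : ρ < ‖w‖) :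
    ‖ret ρ v - ret ρ w‖ ≤ 2 * ‖v - w‖ := by
  rw [ret_eq_self hv]
  unfold ret
  rw [if_neg (not_le.mpr hw)]
  have hw0 : 0 < ‖w‖ := lt_of_le_of_lt hρ hw
  have h1 : v - (ρ * ‖w‖⁻¹) • w = (v - w) + (1 - ρ * ‖w‖⁻¹) • w := by
    rw [sub_smul, one_smul]; abel
  rw [h1]
  have h2 : ‖(1 - ρ * ‖w‖⁻¹) • w‖ = ‖w‖ - ρ := by
    rw [norm_smul, Real.norm_eq_abs]
    have h3 : (0:ℝ) ≤ 1 - ρ * ‖w‖⁻¹ := by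
      rw [sub_nonneg, mul_inv_le_iff₀ hw0, one_mul]
      exact le_of_lt hw
    rw [abs_of_nonneg h3]
    field_simp
  have h4 : ‖w‖ - ρ ≤ ‖v - w‖ := by
    have := norm_sub_norm_le (v - w)  -- not directly; do manually
    have h5 : ‖w‖ - ‖v‖ ≤ ‖w - v‖ := by
      have := norm_sub_norm_le w v
      linarith [this]
    rw [norm_sub_rev] at h5
    linarith
  calc ‖(v - w) + (1 - ρ * ‖w‖⁻¹) • w‖ ≤ ‖v - w‖ + ‖(1 - ρ * ‖w‖⁻¹) • w‖ := norm_add_le _ _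
    _ = ‖v - w‖ + (‖w‖ - ρ) := by rw [h2]
    _ ≤ ‖v - w‖ + ‖v - w‖ := by linarith
    _ = 2 * ‖v - w‖ := by ring

lemma ret_lipschitz {ρ : ℝ} (hρ : 0 ≤ ρ) : LipschitzWith 2 (ret (E' := E') ρ) := by
  rw [lipschitzWith_iff_dist_le_mul]
  intro v w
  rw [dist_eq_norm, dist_eq_norm]
  push_cast
  rcases le_or_gt ‖v‖ ρ with hv | hv
  · rcases le_or_gt ‖w‖ ρ with hw | hw
    · rw [ret_eq_self hv, ret_eq_self hw]
      nlinarith [norm_nonneg (v - w)]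
    · exact ret_lipschitz_aux hρ hv hw
  · rcases le_or_gt ‖w‖ ρ with hw | hw
    · rw [norm_sub_rev, norm_sub_rev v w]
      exact ret_lipschitz_aux hρ hw hv
    · -- both outside
      unfold ret
      rw [if_neg (not_le.mpr hv), if_neg (not_le.mpr hw)]
      have hv0 : 0 < ‖v‖ := lt_of_le_of_lt hρ hv
      have hw0 : 0 < ‖w‖ := lt_of_le_of_lt hρ hw
      have key : (ρ * ‖v‖⁻¹) • v - (ρ * ‖w‖⁻¹) • w
          = (ρ * ‖v‖⁻¹) • (v - w) + ((ρ * ‖v‖⁻¹) - (ρ * ‖w‖⁻¹)) • w := by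
        rw [smul_sub, sub_smul]; abel
      rw [key]
      have h1 : ‖(ρ * ‖v‖⁻¹) • (v - w)‖ ≤ ‖v - w‖ := by
        rw [norm_smul, Real.norm_eq_abs, abs_of_nonneg (by positivity)]
        have : ρ * ‖v‖⁻¹ ≤ 1 := by
          rw [mul_inv_le_iff₀ hv0, one_mul]; exact le_of_lt hv
        nlinarith [norm_nonneg (v - w)]
      have h2 : ‖((ρ * ‖v‖⁻¹) - (ρ * ‖w‖⁻¹)) • w‖ ≤ ‖v - w‖ := by
        rw [norm_smul, Real.norm_eq_abs]
        have hdiff : ρ * ‖v‖⁻¹ - ρ * ‖w‖⁻¹ = ρ * (‖w‖ - ‖v‖) / (‖v‖ * ‖w‖) := by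
          field_simp
        have hvw : (0:ℝ) < ‖v‖ * ‖w‖ := mul_pos hv0 hw0
        rw [hdiff, abs_div, abs_mul, abs_of_nonneg hρ,
          abs_of_nonneg (le_of_lt hvw), div_mul_eq_mul_div, div_le_iff₀ hvw]
        have hnn : |‖w‖ - ‖v‖| ≤ ‖v - w‖ := by
          rw [abs_sub_comm]
          exact abs_norm_sub_norm_le v w
        have h6 : ρ * |‖w‖ - ‖v‖| ≤ ‖v‖ * |‖w‖ - ‖v‖| :=
          mul_le_mul_of_nonneg_right (le_of_lt hv) (abs_nonneg _)
        have h7 : ‖v‖ * |‖w‖ - ‖v‖| ≤ ‖v‖ * ‖v - w‖ :=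
          mul_le_mul_of_nonneg_left hnn (le_of_lt hv0)
        have h8 := mul_le_mul_of_nonneg_right (le_trans h6 h7) (norm_nonneg w)
        nlinarith [h8]
      calc ‖(ρ * ‖v‖⁻¹) • (v - w) + ((ρ * ‖v‖⁻¹) - (ρ * ‖w‖⁻¹)) • w‖
          ≤ ‖(ρ * ‖v‖⁻¹) • (v - w)‖ + ‖((ρ * ‖v‖⁻¹) - (ρ * ‖w‖⁻¹)) • w‖ := norm_add_le _ _
        _ ≤ ‖v - w‖ + ‖v - w‖ := add_le_add h1 h2
        _ = 2 * ‖v - w‖ := by ring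



variable {C : ℝ} {k : ℕ → ℝ} {X : ℕ → ℝ → ℝ}

lemma k_nonneg (hs : IsDyadicSolutionOn C k X (Ici 0)) (n : ℕ) : 0 ≤ k n := by
  rcases Nat.eq_zero_or_pos n with h | h
  · simp [h, hs.2.1]
  · exact (hs.2.2.1 n h).1

lemma contOn (hs : IsDyadicSolutionOn C k X (Ici 0)) (n : ℕ) :
    ContinuousOn (X n) (Ici 0) := by
  rcases Nat.eq_zero_or_pos n with h | h
  · subst h
    have : X 0 = fun _ => (0:ℝ) := funext hs.2.2.2.1
    rw [this]; exact continuousOn_const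
  · exact fun t ht => (hs.2.2.2.2.1 n h t ht).continuousWithinAt

/-- Helper : upgrade within-derivative to full derivative at interior points. -/
lemma hasDerivAt_of_pos (hs : IsDyadicSolutionOn C k X (Ici 0)) {n : ℕ} (hn : 1 ≤ n)
    {t : ℝ} (ht : 0 < t) :
    HasDerivAt (X n) (k (n - 1) * X (n - 1) t ^ 2 - k n * X n t * X (n + 1) t) t :=
  (hs.2.2.2.2.1 n hn t (le_of_lt ht)).hasDerivAt (Ici_mem_nhds ht)

lemma nonneg (hs : IsDyadicSolutionOn C k X (Ici 0)) (h0 : ∀ n, 0 ≤ X n 0) :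
    ∀ n, ∀ t ∈ Ici (0:ℝ), 0 ≤ X n t := by
  intro n
  rcases Nat.eq_zero_or_pos n with h | hn
  · intro t _; simp [h, hs.2.2.2.1 t]
  intro t ht
  set aa : ℝ → ℝ := fun s => k n * X (n+1) (max s 0) with haa_def
  have haacont : Continuous aa :=
    continuous_const.mul ((contOn hs (n+1)).comp_continuous
      (continuous_id.max continuous_const) (fun s => mem_Ici.mpr (le_max_right _ _)))
  set A : ℝ → ℝ := fun u => ∫ s in (0:ℝ)..u, aa s with hA_def
  have hAd : ∀ u, HasDerivAt A (aa u) u := fun u =>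
    intervalIntegral.integral_hasDerivAt_right (haacont.intervalIntegrable _ _)
      (haacont.stronglyMeasurableAtFilter _ _) haacont.continuousAt
  have hAcont : Continuous A := by
    rw [continuous_iff_continuousAt]
    exact fun u => (hAd u).differentiableAt.continuousAt
  set g : ℝ → ℝ := fun u => X n u * Real.exp (A u) with hg_def
  have hgd : ∀ u ∈ Ioi (0:ℝ),
      HasDerivAt g (k (n-1) * X (n-1) u ^ 2 * Real.exp (A u)) u := by
    intro u hu
    have h1 := (hasDerivAt_of_pos hs hn hu).mul ((hAd u).exp)
    refine h1.congr_deriv ?_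
    have hmax : max u 0 = u := max_eq_left (le_of_lt hu)
    simp only [haa_def, hmax]
    ring
  have hgmono : MonotoneOn g (Ici 0) := by
    apply monotoneOn_of_deriv_nonneg (convex_Ici 0)
    · exact ((contOn hs n).mul (Real.continuous_exp.comp hAcont).continuousOn)
    · intro u hu
      rw [interior_Ici] at hu
      exact (hgd u hu).differentiableAt.differentiableWithinAt
    · intro u hu
      rw [interior_Ici] at hu
      rw [(hgd u hu).deriv]
      have hknn : 0 ≤ k (n-1) := k_nonneg hs (n-1)
      positivity
  have h00 : g 0 = X n 0 := by
    simp [hg_def, hA_def]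
  have hle : g 0 ≤ g t := hgmono (self_mem_Ici) ht ht
  rw [h00] at hle
  have : 0 ≤ g t := le_trans (h0 n) hle
  exact (mul_nonneg_iff_of_pos_right (Real.exp_pos (A t))).mp this

lemma partial_deriv (hs : IsDyadicSolutionOn C k X (Ici 0)) (N : ℕ) {t : ℝ} (ht : 0 < t) :
    HasDerivAt (fun u => ∑ j ∈ Finset.range N, X (j+1) u ^ 2)
      (-(2 * k N * X N t ^ 2 * X (N+1) t)) t := by
  have h1 : HasDerivAt (fun u => ∑ j ∈ Finset.range N, X (j+1) u ^ 2)
      (∑ j ∈ Finset.range N, (2 * k j * X j t ^ 2 * X (j+1) t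
        - 2 * k (j+1) * X (j+1) t ^ 2 * X (j+2) t)) t := by
    apply HasDerivAt.fun_sum
    intro j _
    have hd := hasDerivAt_of_pos hs (Nat.le_add_left 1 j) ht
    have h2 := hd.pow 2
    refine h2.congr_deriv ?_
    have : (j + 1) - 1 = j := rfl
    rw [this]
    ring
  have h3 : (∑ j ∈ Finset.range N, (2 * k j * X j t ^ 2 * X (j+1) t
        - 2 * k (j+1) * X (j+1) t ^ 2 * X (j+2) t))
      = -(2 * k N * X N t ^ 2 * X (N+1) t) := by
    have := Finset.sum_range_sub' (fun m => 2 * k m * X m t ^ 2 * X (m+1) t) N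
    rw [this, hs.2.1]
    ring
  rwa [h3] at h1

lemma partial_antitone (hs : IsDyadicSolutionOn C k X (Ici 0))
    (hnn : ∀ n, ∀ t ∈ Ici (0:ℝ), 0 ≤ X n t) (N : ℕ) :
    AntitoneOn (fun u => ∑ j ∈ Finset.range N, X (j+1) u ^ 2) (Ici 0) := by
  apply antitoneOn_of_deriv_nonpos (convex_Ici 0)
  · exact continuousOn_finset_sum _ (fun j _ => ((contOn hs (j+1)).pow 2))
  · intro u hu
    rw [interior_Ici] at hu
    exact (partial_deriv hs N hu).differentiableAt.differentiableWithinAt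
  · intro u hu
    rw [interior_Ici] at hu
    rw [(partial_deriv hs N hu).deriv]
    have h1 : 0 ≤ k N := k_nonneg hs N
    have h2 : 0 ≤ X (N+1) u := hnn (N+1) u (mem_Ici.mpr (le_of_lt hu))
    have : 0 ≤ 2 * k N * X N u ^ 2 * X (N+1) u := by positivity
    linarith

lemma energy_mono (hs : IsDyadicSolutionOn C k X (Ici 0))
    (hnn : ∀ n, ∀ t ∈ Ici (0:ℝ), 0 ≤ X n t) :
    ∀ s ∈ Ici (0:ℝ), ∀ t ∈ Ici (0:ℝ), s ≤ t → energy X t ≤ energy X s := by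
  intro s hsm t htm hst
  apply Summable.tsum_le_of_sum_range_le (hs.2.2.2.2.2 t htm)
  intro N
  calc ∑ j ∈ Finset.range N, X (j+1) t ^ 2
      ≤ ∑ j ∈ Finset.range N, X (j+1) s ^ 2 := partial_antitone hs hnn N hsm htm hst
    _ ≤ energy X s := Summable.sum_le_tsum _ (fun i _ => sq_nonneg _) (hs.2.2.2.2.2 s hsm)

lemma sq_le_energy (hs : IsDyadicSolutionOn C k X (Ici 0)) {t : ℝ} (ht : t ∈ Ici (0:ℝ))
    (n : ℕ) : X n t ^ 2 ≤ energy X t := by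
  rcases Nat.eq_zero_or_pos n with h | hn
  · subst h
    simp only [hs.2.2.2.1 t]
    simpa [energy] using tsum_nonneg (fun j : ℕ => sq_nonneg (X (j+1) t))
  · obtain ⟨m, rfl⟩ := Nat.exists_eq_add_of_le hn
    have := Summable.le_tsum (hs.2.2.2.2.2 t ht) m (fun i _ => sq_nonneg (X (i+1) t))
    simpa [Nat.add_comm, energy] using this

lemma abs_le_M (hs : IsDyadicSolutionOn C k X (Ici 0))
    (hnn : ∀ n, ∀ t ∈ Ici (0:ℝ), 0 ≤ X n t)
    {t : ℝ} (ht : t ∈ Ici (0:ℝ)) (n : ℕ) : |X n t| ≤ Real.sqrt (energy X 0) := by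
  have h1 : X n t ^ 2 ≤ energy X 0 :=
    le_trans (sq_le_energy hs ht n) (energy_mono hs hnn 0 self_mem_Ici t ht ht)
  calc |X n t| = Real.sqrt (X n t ^ 2) := (Real.sqrt_sq_eq_abs _).symm
    _ ≤ Real.sqrt (energy X 0) := Real.sqrt_le_sqrt h1



variable {C : ℝ} {k : ℕ → ℝ} {X Y : ℕ → ℝ → ℝ}

lemma uniqueness (hsX : IsDyadicSolutionOn C k X (Ici 0))
    (hsY : IsDyadicSolutionOn C k Y (Ici 0))
    (h00 : ∀ n, X n 0 = Y n 0) (h0 : ∀ n, 0 ≤ X n 0) :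
    ∀ n, ∀ t ∈ Ici (0:ℝ), X n t = Y n t := by
  have h0Y : ∀ n, 0 ≤ Y n 0 := fun n => (h00 n) ▸ h0 n
  have hnnX : ∀ n, ∀ t ∈ Ici (0:ℝ), 0 ≤ X n t := nonneg hsX h0
  have hnnY : ∀ n, ∀ t ∈ Ici (0:ℝ), 0 ≤ Y n t := nonneg hsY h0Y
  set M : ℝ := max (Real.sqrt (energy X 0)) (Real.sqrt (energy Y 0)) with hM_def
  have hM0 : 0 ≤ M := le_trans (Real.sqrt_nonneg _) (le_max_left _ _)
  have hbX : ∀ n, ∀ t ∈ Ici (0:ℝ), |X n t| ≤ M := fun n t ht =>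
    le_trans (abs_le_M hsX hnnX ht n) (le_max_left _ _)
  have hbY : ∀ n, ∀ t ∈ Ici (0:ℝ), |Y n t| ≤ M := fun n t ht =>
    le_trans (abs_le_M hsY hnnY ht n) (le_max_right _ _)
  -- the flux and dissipation terms
  set e : ℕ → ℝ → ℝ := fun m u => (2:ℝ)⁻¹^m * k m * (X m u + Y m u) *
      ((X m u - Y m u) * (X (m+1) u - Y (m+1) u)) with he_def
  set r : ℕ → ℝ → ℝ := fun m u => (2:ℝ)⁻¹^m * k m * (X (m+1) u + Y (m+1) u) *
      (X m u - Y m u)^2 with hr_def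
  set ψ : ℕ → ℝ → ℝ := fun N s => (2:ℝ)⁻¹^N * k N * (X N (max s 0) + Y N (max s 0)) *
      (|X N (max s 0) - Y N (max s 0)| * |X (N+1) (max s 0) - Y (N+1) (max s 0)|) with hψ_def
  set φ : ℕ → ℝ → ℝ := fun N u => ∑ j ∈ Finset.range N, (2:ℝ)⁻¹^(j+1) *
      (X (j+1) u - Y (j+1) u)^2 with hφ_def
  have contmax : Continuous (fun s : ℝ => max s 0) := continuous_id.max continuous_const
  have hcont : ∀ (W : ℕ → ℝ → ℝ), IsDyadicSolutionOn C k W (Ici 0) → ∀ n,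
      Continuous (fun s => W n (max s 0)) := fun W hW n =>
    (contOn hW n).comp_continuous contmax (fun s => mem_Ici.mpr (le_max_right _ _))
  have hψcont : ∀ N, Continuous (ψ N) := by
    intro N
    exact (continuous_const.mul ((hcont X hsX N).add (hcont Y hsY N))).mul
      ((((hcont X hsX N).sub (hcont Y hsY N)).abs).mul
        (((hcont X hsX (N+1)).sub (hcont Y hsY (N+1))).abs))
  -- derivative of φ N at interior points
  have hφd : ∀ N, ∀ t ∈ Ioi (0:ℝ), HasDerivAt (φ N)
      (-(e N t) - ∑ j ∈ Finset.range N, r (j+1) t) t := by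
    intro N t ht
    have h1 : HasDerivAt (φ N)
        (∑ j ∈ Finset.range N, ((e j t - e (j+1) t) - r (j+1) t)) t := by
      apply HasDerivAt.fun_sum
      intro j _
      have hdX := hasDerivAt_of_pos hsX (Nat.le_add_left 1 j) ht
      have hdY := hasDerivAt_of_pos hsY (Nat.le_add_left 1 j) ht
      have hZ := (hdX.sub hdY).pow 2
      have h2 := hZ.const_mul ((2:ℝ)⁻¹^(j+1))
      refine h2.congr_deriv ?_
      simp only [he_def, hr_def, show (j+1) - 1 = j from rfl, Pi.sub_apply]
      ring
    have h3 : (∑ j ∈ Finset.range N, ((e j t - e (j+1) t) - r (j+1) t))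
        = -(e N t) - ∑ j ∈ Finset.range N, r (j+1) t := by
      rw [Finset.sum_sub_distrib, Finset.sum_range_sub' (fun m => e m t) N]
      have : e 0 t = 0 := by simp [he_def, hsX.2.1]
      rw [this]; ring
    rwa [h3] at h1
  -- key integral bound : φ N t ≤ ∫_0^t ψ N
  have hkey : ∀ N, ∀ t ∈ Ici (0:ℝ), φ N t ≤ ∫ s in (0:ℝ)..t, ψ N s := by
    intro N t ht
    set h : ℝ → ℝ := fun u => φ N u - ∫ s in (0:ℝ)..u, ψ N s with hh_def
    have hFTC : ∀ u, HasDerivAt (fun w => ∫ s in (0:ℝ)..w, ψ N s) (ψ N u) u := fun u =>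
      intervalIntegral.integral_hasDerivAt_right ((hψcont N).intervalIntegrable _ _)
        ((hψcont N).stronglyMeasurableAtFilter _ _) (hψcont N).continuousAt
    have hanti : AntitoneOn h (Ici 0) := by
      apply antitoneOn_of_deriv_nonpos (convex_Ici 0)
      · apply ContinuousOn.sub
        · exact continuousOn_finset_sum _ (fun j _ =>
            (continuousOn_const.mul (((contOn hsX (j+1)).sub (contOn hsY (j+1))).pow 2)))
        · exact fun u _ => ((hFTC u).differentiableAt.continuousAt).continuousWithinAt
      · intro u hu
        rw [interior_Ici] at hu
        exact ((hφd N u hu).sub (hFTC u)).differentiableAt.differentiableWithinAt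
      · intro u hu
        rw [interior_Ici] at hu
        rw [((hφd N u hu).fun_sub (hFTC u)).deriv]
        have humem : u ∈ Ici (0:ℝ) := mem_Ici.mpr (le_of_lt hu)
        have hmax : max u 0 = u := max_eq_left (le_of_lt hu)
        have hnnA : 0 ≤ (2:ℝ)⁻¹^N * k N * (X N u + Y N u) := by
          have h1 := k_nonneg hsX N
          have h2 := add_nonneg (hnnX N u humem) (hnnY N u humem)
          positivity
        have habs : |e N u| ≤ ψ N u := by
          simp only [hψ_def, hmax, he_def]
          rw [abs_mul, abs_of_nonneg hnnA, abs_mul]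
        have hrnn : 0 ≤ ∑ j ∈ Finset.range N, r (j+1) u := by
          apply Finset.sum_nonneg
          intro j _
          have : 0 ≤ (2:ℝ)⁻¹^(j+1) * k (j+1) := by
            have := k_nonneg hsX (j+1); positivity
          exact mul_nonneg (mul_nonneg this
            (add_nonneg (hnnX (j+2) u humem) (hnnY (j+2) u humem))) (sq_nonneg _)
        have := (abs_le.mp habs).1
        linarith
    have h1 : h t ≤ h 0 := hanti self_mem_Ici ht ht
    have h2 : h 0 = 0 := by
      simp only [hh_def, intervalIntegral.integral_same, sub_zero, hφ_def]
      apply Finset.sum_eq_zero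
      intro j _
      rw [h00 (j+1)]
      ring
    rw [h2] at h1
    simp only [hh_def] at h1
    linarith
  -- pass to the limit N → ∞
  intro n t ht
  rcases Nat.eq_zero_or_pos n with hz | hn
  · rw [hz, hsX.2.2.2.1 t, hsY.2.2.2.1 t]
  obtain ⟨m, rfl⟩ := Nat.exists_eq_add_of_le hn
  have h2M : (0:ℝ) ≤ 2*M := by linarith
  have hCpos := hsX.1
  -- the integrals of ψ N tend to 0
  have hIlim : Tendsto (fun N => ∫ s in (0:ℝ)..t, ψ N s) atTop (𝓝 0) := by
    have key : Tendsto (fun N => ∫ s in (0:ℝ)..t, ψ N s) atTop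
        (𝓝 (∫ s in (0:ℝ)..t, (0:ℝ))) := by
      apply intervalIntegral.tendsto_integral_filter_of_dominated_convergence
        (fun _ => C * (2*M) * ((2*M) * (2*M)))
      · exact Eventually.of_forall (fun N => ((hψcont N).aestronglyMeasurable))
      · apply Eventually.of_forall
        intro N
        refine Eventually.of_forall (fun s _ => ?_)
        rw [Real.norm_eq_abs]
        have hsm : max s 0 ∈ Ici (0:ℝ) := mem_Ici.mpr (le_max_right _ _)
        have hnn0 : 0 ≤ X N (max s 0) + Y N (max s 0) :=
          add_nonneg (hnnX N _ hsm) (hnnY N _ hsm)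
        have hknn := k_nonneg hsX N
        have hψnn : 0 ≤ ψ N s := by
          have h1 : 0 ≤ (2:ℝ)⁻¹^N * k N := by positivity
          exact mul_nonneg (mul_nonneg h1 hnn0) (mul_nonneg (abs_nonneg _) (abs_nonneg _))
        rw [abs_of_nonneg hψnn]
        rcases Nat.eq_zero_or_pos N with hN0 | hN1
        · have hz : ψ N s = 0 := by
            simp [hψ_def, hN0, hsX.2.1]
          rw [hz]
          exact mul_nonneg (mul_nonneg (le_of_lt hCpos) h2M) (mul_nonneg h2M h2M)
        have hb1 : X N (max s 0) + Y N (max s 0) ≤ 2*M := by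
          have h1 := abs_le.mp (hbX N _ hsm)
          have h2 := abs_le.mp (hbY N _ hsm)
          linarith [h1.2, h2.2]
        have hb2 : |X N (max s 0) - Y N (max s 0)| ≤ 2*M := by
          have h1 := abs_le.mp (hbX N _ hsm)
          have h2 := abs_le.mp (hbY N _ hsm)
          rw [abs_le]; constructor <;> linarith
        have hb3 : |X (N+1) (max s 0) - Y (N+1) (max s 0)| ≤ 2*M := by
          have h1 := abs_le.mp (hbX (N+1) _ hsm)
          have h2 := abs_le.mp (hbY (N+1) _ hsm)
          rw [abs_le]; constructor <;> linarith
        have hwk : (2:ℝ)⁻¹^N * k N ≤ C := by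
          have hkN := (hsX.2.2.1 N hN1).2
          rw [inv_pow, inv_mul_le_iff₀ (by positivity)]
          calc k N ≤ C * 2^N := hkN
            _ = 2^N * C := by ring
        have step1 : (2:ℝ)⁻¹^N * k N * (X N (max s 0) + Y N (max s 0)) ≤ C * (2*M) :=
          mul_le_mul hwk hb1 hnn0 (le_of_lt hCpos)
        have step2 : |X N (max s 0) - Y N (max s 0)| *
            |X (N+1) (max s 0) - Y (N+1) (max s 0)| ≤ (2*M)*(2*M) :=
          mul_le_mul hb2 hb3 (abs_nonneg _) h2M
        exact mul_le_mul step1 step2 (mul_nonneg (abs_nonneg _) (abs_nonneg _))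
          (mul_nonneg (le_of_lt hCpos) h2M)
      · exact intervalIntegrable_const
      · apply Eventually.of_forall
        intro s _
        have hsm : max s 0 ∈ Ici (0:ℝ) := mem_Ici.mpr (le_max_right _ _)
        -- components tend to zero
        have hcomp : ∀ (W : ℕ → ℝ → ℝ), IsDyadicSolutionOn C k W (Ici 0) →
            Tendsto (fun N => W N (max s 0)) atTop (𝓝 0) := by
          intro W hW
          have hsummW := hW.2.2.2.2.2 (max s 0) hsm
          have h1 : Tendsto (fun j => W (j+1) (max s 0) ^ 2) atTop (𝓝 0) :=
            hsummW.tendsto_atTop_zero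
          have h2 : Tendsto (fun j => |W (j+1) (max s 0)|) atTop (𝓝 0) := by
            have h3 := (Real.continuous_sqrt.tendsto 0).comp h1
            simp only [Function.comp_def, Real.sqrt_sq_eq_abs, Real.sqrt_zero] at h3
            exact h3
          have h4 : Tendsto (fun j => W (j+1) (max s 0)) atTop (𝓝 0) := by
            rw [tendsto_zero_iff_abs_tendsto_zero]
            exact h2
          exact (tendsto_add_atTop_iff_nat 1).mp h4
        have hZ : Tendsto (fun N => |X N (max s 0) - Y N (max s 0)|) atTop (𝓝 0) := by
          have := ((hcomp X hsX).sub (hcomp Y hsY)).abs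
          simpa using this
        apply squeeze_zero
        · intro N
          have hknn := k_nonneg hsX N
          have h1 : 0 ≤ (2:ℝ)⁻¹^N * k N := by positivity
          exact mul_nonneg (mul_nonneg h1
            (add_nonneg (hnnX N _ hsm) (hnnY N _ hsm)))
            (mul_nonneg (abs_nonneg _) (abs_nonneg _))
        · intro N
          show ψ N s ≤ C * (2*M) * (2*M) * |X N (max s 0) - Y N (max s 0)|
          rcases Nat.eq_zero_or_pos N with hN0 | hN1
          · have hz : ψ N s = 0 := by simp [hψ_def, hN0, hsX.2.1]
            rw [hz]
            exact mul_nonneg (mul_nonneg (mul_nonneg (le_of_lt hCpos) h2M) h2M)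
              (abs_nonneg _)
          · have hb1 : X N (max s 0) + Y N (max s 0) ≤ 2*M := by
              have h1 := abs_le.mp (hbX N _ hsm)
              have h2 := abs_le.mp (hbY N _ hsm)
              linarith [h1.2, h2.2]
            have hb3 : |X (N+1) (max s 0) - Y (N+1) (max s 0)| ≤ 2*M := by
              have h1 := abs_le.mp (hbX (N+1) _ hsm)
              have h2 := abs_le.mp (hbY (N+1) _ hsm)
              rw [abs_le]; constructor <;> linarith
            have hwk : (2:ℝ)⁻¹^N * k N ≤ C := by
              have hkN := (hsX.2.2.1 N hN1).2
              rw [inv_pow, inv_mul_le_iff₀ (by positivity)]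
              calc k N ≤ C * 2^N := hkN
                _ = 2^N * C := by ring
            have hnn0 : 0 ≤ X N (max s 0) + Y N (max s 0) :=
              add_nonneg (hnnX N _ hsm) (hnnY N _ hsm)
            have step1 : (2:ℝ)⁻¹^N * k N * (X N (max s 0) + Y N (max s 0)) ≤ C * (2*M) :=
              mul_le_mul hwk hb1 hnn0 (le_of_lt hCpos)
            have step2 : |X N (max s 0) - Y N (max s 0)| *
                |X (N+1) (max s 0) - Y (N+1) (max s 0)|
                ≤ |X N (max s 0) - Y N (max s 0)| * (2*M) :=
              mul_le_mul_of_nonneg_left hb3 (abs_nonneg _)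
            calc ψ N s ≤ C * (2*M) * (|X N (max s 0) - Y N (max s 0)| * (2*M)) := by
                  refine mul_le_mul step1 step2 (mul_nonneg (abs_nonneg _) (abs_nonneg _)) ?_
                  exact mul_nonneg (le_of_lt hCpos) h2M
              _ = C * (2*M) * (2*M) * |X N (max s 0) - Y N (max s 0)| := by ring
        · have h5 : Tendsto (fun N : ℕ => C * (2*M) * (2*M) *
              |X N (max s 0) - Y N (max s 0)|) atTop (𝓝 (C * (2*M) * (2*M) * 0)) :=
            hZ.const_mul _
          simpa using h5
    simpa using key
  -- individual term bound and conclusion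
  have hterm : ∀ N, m + 1 ≤ N → (2:ℝ)⁻¹^(m+1) * (X (m+1) t - Y (m+1) t)^2
      ≤ ∫ s in (0:ℝ)..t, ψ N s := by
    intro N hN
    refine le_trans ?_ (hkey N t ht)
    simp only [hφ_def]
    exact Finset.single_le_sum (f := fun j => (2:ℝ)⁻¹^(j+1) * (X (j+1) t - Y (j+1) t)^2)
      (fun j _ => by positivity) (Finset.mem_range.mpr (by omega))
  have hle0 : (2:ℝ)⁻¹^(m+1) * (X (m+1) t - Y (m+1) t)^2 ≤ 0 := by
    apply ge_of_tendsto hIlim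
    filter_upwards [eventually_ge_atTop (m+1)] with N hN
    exact hterm N hN
  have hsq : (X (m+1) t - Y (m+1) t)^2 = 0 := by
    have hge : (0:ℝ) ≤ (X (m+1) t - Y (m+1) t)^2 := sq_nonneg _
    have hpos : (0:ℝ) < (2:ℝ)⁻¹^(m+1) := by positivity
    nlinarith
  have hz := (pow_eq_zero_iff (two_ne_zero)).mp hsq
  rw [Nat.add_comm]
  linarith [sub_eq_zero.mp hz]



noncomputable def ulim (U : Ultrafilter ℕ) (f : ℕ → ℝ) : ℝ :=
  letI := Classical.dec (∃ l : ℝ, Tendsto f (U : Filter ℕ) (𝓝 l))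
  if h : ∃ l : ℝ, Tendsto f (U : Filter ℕ) (𝓝 l) then h.choose else 0

lemma ulim_spec {U : Ultrafilter ℕ} {f : ℕ → ℝ}
    (h : ∃ l, Tendsto f (U : Filter ℕ) (𝓝 l)) :
    Tendsto f (U : Filter ℕ) (𝓝 (ulim U f)) := by
  unfold ulim
  rw [dif_pos h]
  exact h.choose_spec

lemma ulim_eq {U : Ultrafilter ℕ} {f : ℕ → ℝ} {a : ℝ}
    (h : Tendsto f (U : Filter ℕ) (𝓝 a)) : ulim U f = a :=
  tendsto_nhds_unique (ulim_spec ⟨a, h⟩) h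

lemma exists_lim_of_bounded {U : Ultrafilter ℕ} {f : ℕ → ℝ} {M : ℝ}
    (hb : ∀ n, |f n| ≤ M) : ∃ l, Tendsto f (U : Filter ℕ) (𝓝 l) := by
  have hmem : Icc (-M) M ∈ (U.map f) := by
    apply Filter.mem_map.mpr
    have h1 : ∀ n, f n ∈ Icc (-M) M := fun n => abs_le.mp (hb n)
    exact Filter.univ_mem' h1
  obtain ⟨l, _, hl⟩ := (isCompact_Icc (a := -M) (b := M)).ultrafilter_le_nhds
    (U.map f) (le_principal_iff.mpr hmem)
  refine ⟨l, ?_⟩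
  have h2 : Filter.map f (U : Filter ℕ) ≤ 𝓝 l := by
    rw [← Ultrafilter.coe_map]
    exact hl
  exact h2

lemma tendsto_ulim_of_bounded {U : Ultrafilter ℕ} {f : ℕ → ℝ} {M : ℝ}
    (hb : ∀ n, |f n| ≤ M) : Tendsto f (U : Filter ℕ) (𝓝 (ulim U f)) :=
  ulim_spec (exists_lim_of_bounded hb)

lemma hyper_le_atTop : (Filter.hyperfilter ℕ : Filter ℕ) ≤ atTop := by
  rw [← Nat.cofinite_eq_atTop]
  exact Filter.hyperfilter_le_cofinite



set_option maxHeartbeats 1000000 in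
lemma galerkin {C : ℝ} {k : ℕ → ℝ} (hC : 0 < C) (hk0 : k 0 = 0)
    (hk : ∀ n : ℕ, 1 ≤ n → 0 ≤ k n ∧ k n ≤ C * 2 ^ n)
    (x : ℕ → ℝ) (hx : Summable fun j : ℕ => x (j + 1) ^ 2)
    (N : ℕ) (hN : 1 ≤ N) :
    ∃ W : ℕ → ℝ → ℝ,
      (∀ t, W 0 t = 0) ∧
      (∀ n, 1 ≤ n → n ≤ N → W n 0 = x n) ∧
      (∀ n, N < n → ∀ t, W n t = 0) ∧
      (∀ n, 1 ≤ n → n ≤ N → ∀ t ∈ Ici (0:ℝ), HasDerivWithinAt (W n)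
          (k (n-1) * W (n-1) t ^ 2 - k n * W n t * W (n+1) t) (Ici 0) t) ∧
      (∀ t ∈ Ici (0:ℝ), ∀ K : ℕ,
          ∑ j ∈ Finset.range K, W (j+1) t ^ 2 ≤ ∑' j : ℕ, x (j+1)^2) ∧
      (∀ n, ∀ t ∈ Ici (0:ℝ), W n t ^ 2 ≤ ∑' j : ℕ, x (j+1)^2) := by
  classical
  set E0 : ℝ := ∑' j : ℕ, x (j+1)^2 with hE0_def
  have hE0 : 0 ≤ E0 := tsum_nonneg (fun j => sq_nonneg _)
  set ρ : ℝ := Real.sqrt E0 + 1 with hρ_def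
  have hρ1 : 1 ≤ ρ := le_add_of_nonneg_left (Real.sqrt_nonneg _)
  have hρ0 : 0 < ρ := lt_of_lt_of_le one_pos hρ1
  -- the embedding of finite vectors into sequences
  set ev : (Fin N → ℝ) → ℕ → ℝ :=
    fun v ℓ => if h : 1 ≤ ℓ ∧ ℓ ≤ N then v ⟨ℓ-1, by omega⟩ else 0 with hev_def
  have hev_le : ∀ (v : Fin N → ℝ) (ℓ : ℕ), |ev v ℓ| ≤ ‖v‖ := by
    intro v ℓ
    simp only [hev_def]
    split_ifs with h
    · exact norm_le_pi_norm v _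
    · simpa using norm_nonneg v
  have hev_smul : ∀ (c : ℝ) (v : Fin N → ℝ) (ℓ : ℕ), ev (c • v) ℓ = c * ev v ℓ := by
    intro c v ℓ
    simp only [hev_def]
    split_ifs with h
    · simp
    · ring
  have hev_lip : ∀ (v w : Fin N → ℝ) (ℓ : ℕ), |ev v ℓ - ev w ℓ| ≤ ‖v - w‖ := by
    intro v w ℓ
    simp only [hev_def]
    split_ifs with h
    · have := norm_le_pi_norm (v - w) ⟨ℓ-1, by omega⟩
      simpa using this
    · simpa using norm_nonneg (v - w)
  have hknn : ∀ i : ℕ, 0 ≤ k i := by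
    intro i
    rcases Nat.eq_zero_or_pos i with h | h
    · simp [h, hk0]
    · exact (hk i h).1
  have hkb : ∀ i : ℕ, i ≤ N → k i ≤ C * 2^N := by
    intro i hi
    rcases Nat.eq_zero_or_pos i with h | h
    · rw [h, hk0]; positivity
    · refine le_trans (hk i h).2 ?_
      have : (2:ℝ)^i ≤ 2^N := pow_le_pow_right₀ one_le_two hi
      nlinarith
  -- the vector field
  set Fld : (Fin N → ℝ) → (Fin N → ℝ) :=
    fun v i => k (i:ℕ) * ev v (i:ℕ) ^ 2
      - k ((i:ℕ)+1) * ev v ((i:ℕ)+1) * ev v ((i:ℕ)+2) with hFld_def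
  set B : ℝ := 2*C*2^N*ρ^2 with hB_def
  have hB0 : 0 < B := by positivity
  have hFld_bound : ∀ v : Fin N → ℝ, ‖v‖ ≤ ρ → ‖Fld v‖ ≤ B := by
    intro v hv
    rw [pi_norm_le_iff_of_nonneg (le_of_lt hB0)]
    intro i
    have h1 : ∀ ℓ : ℕ, |ev v ℓ| ≤ ρ := fun ℓ => le_trans (hev_le v ℓ) hv
    have hi1 : (i:ℕ) ≤ N := le_of_lt i.isLt
    have hi2 : (i:ℕ)+1 ≤ N := i.isLt
    have hk1 := hkb _ hi1
    have hk2 := hkb _ hi2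
    rw [Real.norm_eq_abs, hFld_def]
    have e1 : |k (i:ℕ) * ev v (i:ℕ) ^ 2| ≤ C * 2^N * ρ^2 := by
      rw [abs_mul, abs_of_nonneg (hknn _), abs_pow]
      have := h1 (i:ℕ)
      have h2 : |ev v (i:ℕ)|^2 ≤ ρ^2 := by nlinarith [abs_nonneg (ev v (i:ℕ))]
      exact mul_le_mul hk1 h2 (sq_nonneg _) (by positivity)
    have e2 : |k ((i:ℕ)+1) * ev v ((i:ℕ)+1) * ev v ((i:ℕ)+2)| ≤ C * 2^N * ρ^2 := by
      rw [abs_mul, abs_mul, abs_of_nonneg (hknn _)]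
      have h2 := h1 ((i:ℕ)+1)
      have h3 := h1 ((i:ℕ)+2)
      have step : k ((i:ℕ)+1) * |ev v ((i:ℕ)+1)| ≤ C * 2^N * ρ :=
        mul_le_mul hk2 h2 (abs_nonneg _) (by positivity)
      calc k ((i:ℕ)+1) * |ev v ((i:ℕ)+1)| * |ev v ((i:ℕ)+2)|
          ≤ (C * 2^N * ρ) * ρ :=
            mul_le_mul step h3 (abs_nonneg _) (by positivity)
        _ = C * 2^N * ρ^2 := by ring
    calc |k (i:ℕ) * ev v (i:ℕ) ^ 2 - k ((i:ℕ)+1) * ev v ((i:ℕ)+1) * ev v ((i:ℕ)+2)|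
        ≤ |k (i:ℕ) * ev v (i:ℕ) ^ 2| + |k ((i:ℕ)+1) * ev v ((i:ℕ)+1) * ev v ((i:ℕ)+2)| :=
          abs_sub _ _
      _ ≤ C * 2^N * ρ^2 + C * 2^N * ρ^2 := add_le_add e1 e2
      _ = B := by rw [hB_def]; ring
  set K1 : ℝ := 4*C*2^N*ρ with hK1_def
  have hK10 : 0 < K1 := by positivity
  have hFld_lip : ∀ v w : Fin N → ℝ, ‖v‖ ≤ ρ → ‖w‖ ≤ ρ →
      ‖Fld v - Fld w‖ ≤ K1 * ‖v - w‖ := by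
    intro v w hv hw
    rw [pi_norm_le_iff_of_nonneg (by positivity)]
    intro i
    have h1 : ∀ ℓ : ℕ, |ev v ℓ| ≤ ρ := fun ℓ => le_trans (hev_le v ℓ) hv
    have h2 : ∀ ℓ : ℕ, |ev w ℓ| ≤ ρ := fun ℓ => le_trans (hev_le w ℓ) hw
    have hd : ∀ ℓ : ℕ, |ev v ℓ - ev w ℓ| ≤ ‖v - w‖ := hev_lip v w
    have hi1 : (i:ℕ) ≤ N := le_of_lt i.isLt
    have hi2 : (i:ℕ)+1 ≤ N := i.isLt
    have hk1 := hkb _ hi1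
    have hk2 := hkb _ hi2
    rw [Pi.sub_apply, Real.norm_eq_abs, hFld_def]
    have key : |(k (i:ℕ) * ev v (i:ℕ) ^ 2 - k ((i:ℕ)+1) * ev v ((i:ℕ)+1) * ev v ((i:ℕ)+2))
        - (k (i:ℕ) * ev w (i:ℕ) ^ 2 - k ((i:ℕ)+1) * ev w ((i:ℕ)+1) * ev w ((i:ℕ)+2))|
        ≤ K1 * ‖v - w‖ := by
      have q1 : |k (i:ℕ) * (ev v (i:ℕ) ^ 2 - ev w (i:ℕ) ^ 2)| ≤ C * 2^N * (2*ρ*‖v - w‖) := by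
        rw [abs_mul, abs_of_nonneg (hknn _)]
        have : |ev v (i:ℕ) ^ 2 - ev w (i:ℕ) ^ 2|
            = |ev v (i:ℕ) + ev w (i:ℕ)| * |ev v (i:ℕ) - ev w (i:ℕ)| := by
          rw [← abs_mul]; ring_nf
        rw [this]
        have ha : |ev v (i:ℕ) + ev w (i:ℕ)| ≤ 2*ρ := by
          have := h1 (i:ℕ); have := h2 (i:ℕ)
          have := abs_add_le (ev v (i:ℕ)) (ev w (i:ℕ))
          linarith
        have hb := hd (i:ℕ)
        have prod : |ev v (i:ℕ) + ev w (i:ℕ)| * |ev v (i:ℕ) - ev w (i:ℕ)|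
            ≤ (2*ρ) * ‖v - w‖ := mul_le_mul ha hb (abs_nonneg _) (by positivity)
        calc k (i:ℕ) * (|ev v (i:ℕ) + ev w (i:ℕ)| * |ev v (i:ℕ) - ev w (i:ℕ)|)
            ≤ (C * 2^N) * ((2*ρ) * ‖v - w‖) :=
              mul_le_mul hk1 prod (mul_nonneg (abs_nonneg _) (abs_nonneg _)) (by positivity)
          _ = C * 2^N * (2*ρ*‖v - w‖) := by ring
      have q2 : |k ((i:ℕ)+1) * (ev v ((i:ℕ)+1) * ev v ((i:ℕ)+2)
          - ev w ((i:ℕ)+1) * ev w ((i:ℕ)+2))| ≤ C * 2^N * (2*ρ*‖v - w‖) := by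
        rw [abs_mul, abs_of_nonneg (hknn _)]
        have hsplit : ev v ((i:ℕ)+1) * ev v ((i:ℕ)+2) - ev w ((i:ℕ)+1) * ev w ((i:ℕ)+2)
            = ev v ((i:ℕ)+1) * (ev v ((i:ℕ)+2) - ev w ((i:ℕ)+2))
              + ev w ((i:ℕ)+2) * (ev v ((i:ℕ)+1) - ev w ((i:ℕ)+1)) := by ring
        rw [hsplit]
        have t1 : |ev v ((i:ℕ)+1) * (ev v ((i:ℕ)+2) - ev w ((i:ℕ)+2))| ≤ ρ * ‖v - w‖ := by
          rw [abs_mul]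
          exact mul_le_mul (h1 _) (hd _) (abs_nonneg _) (le_of_lt hρ0)
        have t2 : |ev w ((i:ℕ)+2) * (ev v ((i:ℕ)+1) - ev w ((i:ℕ)+1))| ≤ ρ * ‖v - w‖ := by
          rw [abs_mul]
          exact mul_le_mul (h2 _) (hd _) (abs_nonneg _) (le_of_lt hρ0)
        have habs := abs_add_le (ev v ((i:ℕ)+1) * (ev v ((i:ℕ)+2) - ev w ((i:ℕ)+2)))
          (ev w ((i:ℕ)+2) * (ev v ((i:ℕ)+1) - ev w ((i:ℕ)+1)))
        have hsum : |ev v ((i:ℕ)+1) * (ev v ((i:ℕ)+2) - ev w ((i:ℕ)+2))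
            + ev w ((i:ℕ)+2) * (ev v ((i:ℕ)+1) - ev w ((i:ℕ)+1))| ≤ 2*(ρ*‖v - w‖) := by
          linarith
        calc k ((i:ℕ)+1) * |ev v ((i:ℕ)+1) * (ev v ((i:ℕ)+2) - ev w ((i:ℕ)+2))
            + ev w ((i:ℕ)+2) * (ev v ((i:ℕ)+1) - ev w ((i:ℕ)+1))|
            ≤ (C * 2^N) * (2*(ρ*‖v - w‖)) :=
              mul_le_mul hk2 hsum (abs_nonneg _) (by positivity)
          _ = C * 2^N * (2*ρ*‖v - w‖) := by ring
      calc |(k (i:ℕ) * ev v (i:ℕ) ^ 2 - k ((i:ℕ)+1) * ev v ((i:ℕ)+1) * ev v ((i:ℕ)+2))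
          - (k (i:ℕ) * ev w (i:ℕ) ^ 2 - k ((i:ℕ)+1) * ev w ((i:ℕ)+1) * ev w ((i:ℕ)+2))|
          = |(k (i:ℕ) * (ev v (i:ℕ) ^ 2 - ev w (i:ℕ) ^ 2))
            - (k ((i:ℕ)+1) * (ev v ((i:ℕ)+1) * ev v ((i:ℕ)+2)
              - ev w ((i:ℕ)+1) * ev w ((i:ℕ)+2)))| := by ring_nf
        _ ≤ |k (i:ℕ) * (ev v (i:ℕ) ^ 2 - ev w (i:ℕ) ^ 2)|
            + |k ((i:ℕ)+1) * (ev v ((i:ℕ)+1) * ev v ((i:ℕ)+2)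
              - ev w ((i:ℕ)+1) * ev w ((i:ℕ)+2))| := abs_sub _ _
        _ ≤ C * 2^N * (2*ρ*‖v - w‖) + C * 2^N * (2*ρ*‖v - w‖) := add_le_add q1 q2
        _ = K1 * ‖v - w‖ := by rw [hK1_def]; ring
    exact key
  -- the modified globally Lipschitz field
  set vf : (Fin N → ℝ) → (Fin N → ℝ) := fun v => Fld (ret ρ v) with hvf_def
  have hvf_bound : ∀ v, ‖vf v‖ ≤ B := fun v =>
    hFld_bound _ (ret_norm_le (le_of_lt hρ0) v)
  set Lr : ℝ := 2 * K1 with hLr_def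
  have hvf_lip : LipschitzWith (Real.toNNReal Lr) vf := by
    apply LipschitzWith.of_dist_le_mul
    intro v w
    rw [dist_eq_norm, dist_eq_norm, Real.coe_toNNReal _ (by positivity)]
    have h1 := hFld_lip (ret ρ v) (ret ρ w)
      (ret_norm_le (le_of_lt hρ0) v) (ret_norm_le (le_of_lt hρ0) w)
    have h2 := (ret_lipschitz (E' := Fin N → ℝ) (le_of_lt hρ0)).dist_le_mul v w
    rw [dist_eq_norm, dist_eq_norm] at h2
    push_cast at h2
    calc ‖vf v - vf w‖ ≤ K1 * ‖ret ρ v - ret ρ w‖ := h1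
      _ ≤ K1 * (2 * ‖v - w‖) := by nlinarith [norm_nonneg (ret ρ v - ret ρ w)]
      _ = Lr * ‖v - w‖ := by rw [hLr_def]; ring
  -- initial data vector
  set v₀ : Fin N → ℝ := fun i => x ((i:ℕ)+1) with hv₀_def
  -- solutions on [0, m+1]
  have hexist : ∀ m : ℕ, ∃ f : ℝ → (Fin N → ℝ), f 0 = v₀ ∧
      ∀ t ∈ Icc (0:ℝ) ((m:ℝ)+1), HasDerivWithinAt f (vf (f t)) (Icc (0:ℝ) ((m:ℝ)+1)) t := by
    intro m
    have hm1 : (0:ℝ) ≤ (m:ℝ)+1 := by positivity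
    have hpl : IsPicardLindelof (fun _ v => vf v)
        (⟨0, ⟨le_refl 0, hm1⟩⟩ : Icc (0:ℝ) ((m:ℝ)+1)) v₀
        (Real.toNNReal (B*((m:ℝ)+1))) 0 (Real.toNNReal B) (Real.toNNReal Lr) := by
      constructor
      · intro t _
        exact (lipschitzOnWith_univ.mpr hvf_lip).mono (subset_univ _)
      · intro v _
        exact continuousOn_const
      · intro t _ v _
        rw [Real.coe_toNNReal _ (le_of_lt hB0)]
        exact hvf_bound v
      · show (Real.toNNReal B : ℝ) * max ((m:ℝ)+1 - 0) (0 - 0)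
            ≤ (Real.toNNReal (B*((m:ℝ)+1)) : ℝ) - ((0:NNReal):ℝ)
        rw [Real.coe_toNNReal _ (le_of_lt hB0), Real.coe_toNNReal _ (by positivity),
          NNReal.coe_zero, sub_zero, sub_zero, sub_zero, max_eq_left hm1]
    exact hpl.exists_eq_forall_mem_Icc_hasDerivWithinAt₀
  choose g hg0 hgd using hexist
  -- consistency of solutions
  have hcons : ∀ (a b : ℕ) (t : ℝ), 0 ≤ t → t ≤ (a:ℝ)+1 → t ≤ (b:ℝ)+1 →
      g a t = g b t := by
    intro a b t ht hta htb
    set T : ℝ := min ((a:ℝ)+1) ((b:ℝ)+1) with hT_def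
    have hT0 : 0 ≤ T := le_min (by positivity) (by positivity)
    have key : EqOn (g a) (g b) (Icc 0 T) := by
      apply ODE_solution_unique_of_mem_Icc_right
        (v := fun _ v => vf v) (s := fun _ => univ) (K := Real.toNNReal Lr)
      · intro s _
        exact lipschitzOnWith_univ.mpr hvf_lip
      · intro u hu
        exact ((hgd a u ⟨hu.1, le_trans hu.2 (min_le_left _ _)⟩).continuousWithinAt).mono
          (fun z hz => ⟨hz.1, le_trans hz.2 (min_le_left _ _)⟩)
      · intro u hu
        have h1 := hgd a u ⟨hu.1, le_of_lt (lt_of_lt_of_le hu.2 (min_le_left _ _))⟩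
        apply h1.mono_of_mem_nhdsWithin
        apply Icc_mem_nhdsGE_of_mem
        exact ⟨hu.1, lt_of_lt_of_le hu.2 (min_le_left _ _)⟩
      · intro u _; trivial
      · intro u hu
        exact ((hgd b u ⟨hu.1, le_trans hu.2 (min_le_right _ _)⟩).continuousWithinAt).mono
          (fun z hz => ⟨hz.1, le_trans hz.2 (min_le_right _ _)⟩)
      · intro u hu
        have h1 := hgd b u ⟨hu.1, le_of_lt (lt_of_lt_of_le hu.2 (min_le_right _ _))⟩
        apply h1.mono_of_mem_nhdsWithin
        apply Icc_mem_nhdsGE_of_mem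
        exact ⟨hu.1, lt_of_lt_of_le hu.2 (min_le_right _ _)⟩
      · intro u _; trivial
      · rw [hg0 a, hg0 b]
    exact key ⟨ht, le_min hta htb⟩
  -- the global solution
  set γ : ℝ → (Fin N → ℝ) := fun t => g ⌈t⌉₊ t with hγ_def
  have hγ0 : γ 0 = v₀ := by
    simp only [hγ_def, Nat.ceil_zero]
    exact hg0 0
  have hγeq : ∀ m : ℕ, ∀ s ∈ Icc (0:ℝ) ((m:ℝ)+1), γ s = g m s := by
    intro m s hs
    apply hcons
    · exact hs.1
    · calc s ≤ (⌈s⌉₊ : ℝ) := Nat.le_ceil s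
        _ ≤ (⌈s⌉₊ : ℝ) + 1 := by linarith
    · exact hs.2
  have hγd : ∀ t ∈ Ici (0:ℝ), HasDerivWithinAt γ (vf (γ t)) (Ici 0) t := by
    intro t ht
    set m : ℕ := ⌈t⌉₊ with hm_def
    have ht1 : t < (m:ℝ)+1 := by
      have := Nat.le_ceil t
      calc t ≤ (m:ℝ) := this
        _ < (m:ℝ)+1 := by linarith
    have hd := hgd m t ⟨ht, le_of_lt ht1⟩
    have hmem : Icc (0:ℝ) ((m:ℝ)+1) ∈ 𝓝[Ici 0] t := by
      rw [mem_nhdsWithin]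
      exact ⟨Iio ((m:ℝ)+1), isOpen_Iio, ht1, fun z hz => ⟨hz.2, le_of_lt hz.1⟩⟩
    have heq : γ =ᶠ[𝓝[Ici 0] t] g m :=
      Filter.eventuallyEq_of_mem hmem (fun s hs => hγeq m s hs)
    have hγt : γ t = g m t := hγeq m t ⟨ht, le_of_lt ht1⟩
    have := (hd.mono_of_mem_nhdsWithin hmem).congr_of_eventuallyEq heq hγt
    rwa [hγt]
  -- telescoping identity
  have hzero : ∀ w : Fin N → ℝ, ∑ i : Fin N, w i * Fld w i = 0 := by
    intro w
    have hwev : ∀ i : Fin N, w i = ev w ((i:ℕ)+1) := by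
      intro i
      simp only [hev_def]
      rw [dif_pos ⟨Nat.le_add_left 1 _, i.isLt⟩]
      have hfin : (⟨(i:ℕ)+1-1, by omega⟩ : Fin N) = i := Fin.ext (by simp)
      rw [hfin]
    set FF : ℕ → ℝ := fun j => k j * ev w j ^ 2 * ev w (j+1) with hFF_def
    have h1 : ∑ i : Fin N, w i * Fld w i
        = ∑ j ∈ Finset.range N, (FF j - FF (j+1)) := by
      rw [← Fin.sum_univ_eq_sum_range (fun j => FF j - FF (j+1)) N]
      apply Finset.sum_congr rfl
      intro i _
      rw [hwev i]
      simp only [hFld_def, hFF_def]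
      ring
    rw [h1, Finset.sum_range_sub' FF N]
    have hFF0 : FF 0 = 0 := by simp [hFF_def, hk0]
    have hFFN : FF N = 0 := by
      have hN1 : ev w (N+1) = 0 := by
        simp only [hev_def]
        rw [dif_neg (by omega)]
      simp [hFF_def, hN1]
    rw [hFF0, hFFN, sub_zero]
  have hFld_smul : ∀ (c : ℝ) (v : Fin N → ℝ) (i : Fin N),
      Fld (c • v) i = c^2 * Fld v i := by
    intro c v i
    simp only [hFld_def, hev_smul]
    ring
  have hzero' : ∀ v : Fin N → ℝ, ∑ i : Fin N, v i * vf v i = 0 := by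
    intro v
    obtain ⟨c, hc⟩ := ret_eq_smul ρ v
    have h1 : ∀ i : Fin N, vf v i = c^2 * Fld v i := by
      intro i
      simp only [hvf_def]
      rw [hc]
      exact hFld_smul c v i
    calc ∑ i : Fin N, v i * vf v i = ∑ i : Fin N, c^2 * (v i * Fld v i) := by
          apply Finset.sum_congr rfl
          intro i _
          rw [h1 i]; ring
      _ = c^2 * ∑ i : Fin N, v i * Fld v i := (Finset.mul_sum _ _ _).symm
      _ = 0 := by rw [hzero v]; ring
  -- energy of γ is constant
  set S : ℝ → ℝ := fun t => ∑ i : Fin N, (γ t i)^2 with hS_def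
  have hci : ∀ t ∈ Ici (0:ℝ), ∀ i : Fin N,
      HasDerivWithinAt (fun u => γ u i) (vf (γ t) i) (Ici 0) t := by
    intro t ht i
    exact (ContinuousLinearMap.proj (R := ℝ)
      (φ := fun _ : Fin N => ℝ) i).hasFDerivAt.comp_hasDerivWithinAt t (hγd t ht)
  have hSd : ∀ t ∈ Ici (0:ℝ), HasDerivWithinAt S 0 (Ici 0) t := by
    intro t ht
    have h1 : HasDerivWithinAt S (∑ i : Fin N, (2 * γ t i ^ 1 * vf (γ t) i)) (Ici 0) t := by
      apply HasDerivWithinAt.fun_sum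
      intro i _
      exact (hci t ht i).pow 2
    have h2 : (∑ i : Fin N, (2 * γ t i ^ 1 * vf (γ t) i)) = 0 := by
      calc ∑ i : Fin N, (2 * γ t i ^ 1 * vf (γ t) i)
          = 2 * ∑ i : Fin N, (γ t i * vf (γ t) i) := by
            rw [Finset.mul_sum]
            apply Finset.sum_congr rfl
            intro i _
            ring
        _ = 0 := by rw [hzero' (γ t)]; ring
    rwa [h2] at h1
  have hSconst : ∀ t ∈ Ici (0:ℝ), S t = S 0 := by
    intro t ht
    have hcontS : ContinuousOn S (Icc 0 t) :=
      fun u hu => ((hSd u hu.1).continuousWithinAt).mono (fun z hz => hz.1)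
    exact constant_of_has_deriv_right_zero hcontS
      (fun u hu => (hSd u hu.1).mono (Ici_subset_Ici.mpr hu.1)) t ⟨ht, le_refl t⟩
  have hS0 : S 0 ≤ E0 := by
    have h1 : S 0 = ∑ j ∈ Finset.range N, x (j+1)^2 := by
      simp only [hS_def, hγ0, hv₀_def]
      exact Fin.sum_univ_eq_sum_range (fun j => x (j+1)^2) N
    rw [h1]
    exact Summable.sum_le_tsum _ (fun i _ => sq_nonneg _) hx
  have hsq : ∀ t ∈ Ici (0:ℝ), ∀ i : Fin N, (γ t i)^2 ≤ E0 := by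
    intro t ht i
    have h1 : (γ t i)^2 ≤ S t :=
      Finset.single_le_sum (f := fun i : Fin N => (γ t i)^2)
        (fun j _ => sq_nonneg _) (Finset.mem_univ i)
    rw [hSconst t ht] at h1
    exact le_trans h1 hS0
  have hγnorm : ∀ t ∈ Ici (0:ℝ), ‖γ t‖ ≤ ρ := by
    intro t ht
    rw [pi_norm_le_iff_of_nonneg (le_of_lt hρ0)]
    intro i
    rw [Real.norm_eq_abs]
    have h1 := hsq t ht i
    have h2 : |γ t i| ≤ Real.sqrt E0 := by
      rw [← Real.sqrt_sq_eq_abs]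
      exact Real.sqrt_le_sqrt h1
    rw [hρ_def]
    linarith
  have hγd' : ∀ t ∈ Ici (0:ℝ), HasDerivWithinAt γ (Fld (γ t)) (Ici 0) t := by
    intro t ht
    have h1 := hγd t ht
    have h2 : vf (γ t) = Fld (γ t) := by
      simp only [hvf_def]
      rw [ret_eq_self (hγnorm t ht)]
    rwa [h2] at h1
  -- assemble the solution
  refine ⟨fun ℓ t => ev (γ t) ℓ, ?_, ?_, ?_, ?_, ?_, ?_⟩
  · intro t
    simp [hev_def]
  · intro n h1 h2
    show ev (γ 0) n = x n
    rw [hγ0]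
    simp only [hev_def]
    rw [dif_pos ⟨h1, h2⟩]
    simp only [hv₀_def]
    congr 1
    omega
  · intro n hn t
    show ev (γ t) n = 0
    simp only [hev_def]
    rw [dif_neg (by omega)]
  · intro n h1 h2 t ht
    have hWn : (fun u => ev (γ u) n) = fun u => γ u (⟨n-1, by omega⟩ : Fin N) := by
      funext u
      simp only [hev_def]
      rw [dif_pos ⟨h1, h2⟩]
    have hder : HasDerivWithinAt (fun u => γ u (⟨n-1, by omega⟩ : Fin N))
        (Fld (γ t) (⟨n-1, by omega⟩ : Fin N)) (Ici 0) t :=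
      (ContinuousLinearMap.proj (R := ℝ)
        (φ := fun _ : Fin N => ℝ) _).hasFDerivAt.comp_hasDerivWithinAt t (hγd' t ht)
    show HasDerivWithinAt (fun u => ev (γ u) n) _ (Ici 0) t
    rw [hWn]
    convert hder using 1
    simp only [hFld_def]
    rw [show n-1+1 = n by omega, show n-1+2 = n+1 by omega]
  · intro t ht K
    set q : ℕ → ℝ := fun j => if h : j < N then (γ t ⟨j, h⟩)^2 else 0 with hq_def
    have hq : ∀ j, ev (γ t) (j+1) ^ 2 = q j := by
      intro j
      simp only [hev_def, hq_def]
      by_cases h : j < N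
      · rw [dif_pos ⟨by omega, by omega⟩, dif_pos h]
        have hfin : ∀ hh : j+1-1 < N, (⟨j+1-1, hh⟩ : Fin N) = ⟨j, h⟩ :=
          fun _ => Fin.ext (by simp)
        rw [hfin]
      · rw [dif_neg (by omega), dif_neg h]
        norm_num
    have hqnn : ∀ j, 0 ≤ q j := by
      intro j
      simp only [hq_def]
      split_ifs
      · exact sq_nonneg _
      · exact le_refl 0
    have hqN : ∑ j ∈ Finset.range N, q j = S t := by
      simp only [hS_def]
      rw [← Fin.sum_univ_eq_sum_range q N]
      apply Finset.sum_congr rfl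
      intro i _
      simp only [hq_def]
      rw [dif_pos i.isLt, Fin.eta]
    have hle : ∑ j ∈ Finset.range K, q j ≤ ∑ j ∈ Finset.range N, q j := by
      rcases le_total K N with h | h
      · exact Finset.sum_le_sum_of_subset_of_nonneg
          (Finset.range_subset_range.mpr h) (fun j _ _ => hqnn j)
      · have heq : ∑ j ∈ Finset.range N, q j = ∑ j ∈ Finset.range K, q j :=
          Finset.sum_subset (Finset.range_subset_range.mpr h)
            (fun j _ hj => by
              simp only [hq_def]
              exact dif_neg (fun hlt => hj (Finset.mem_range.mpr hlt)))
        rw [← heq]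
    calc ∑ j ∈ Finset.range K, ev (γ t) (j+1) ^ 2
        = ∑ j ∈ Finset.range K, q j := Finset.sum_congr rfl (fun j _ => hq j)
      _ ≤ ∑ j ∈ Finset.range N, q j := hle
      _ = S t := hqN
      _ = S 0 := hSconst t ht
      _ ≤ E0 := hS0
  · intro n t ht
    by_cases h : 1 ≤ n ∧ n ≤ N
    · have h1 : ev (γ t) n = γ t ⟨n-1, by omega⟩ := by
        simp only [hev_def]
        rw [dif_pos h]
      show ev (γ t) n ^ 2 ≤ E0
      rw [h1]
      exact hsq t ht _
    · have h1 : ev (γ t) n = 0 := by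
        simp only [hev_def]
        rw [dif_neg h]
      show ev (γ t) n ^ 2 ≤ E0
      rw [h1]
      simpa using hE0



set_option maxHeartbeats 1000000 in
lemma existence {C : ℝ} {k : ℕ → ℝ} (hC : 0 < C) (hk0 : k 0 = 0)
    (hk : ∀ n : ℕ, 1 ≤ n → 0 ≤ k n ∧ k n ≤ C * 2 ^ n)
    (x : ℕ → ℝ) (hx0 : x 0 = 0) (hx : Summable fun j : ℕ => x (j + 1) ^ 2) :
    ∃ X : ℕ → ℝ → ℝ, IsDyadicSolutionOn C k X (Ici 0) ∧ (∀ n, X n 0 = x n) := by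
  classical
  set E0 : ℝ := ∑' j : ℕ, x (j+1)^2 with hE0_def
  have hE0 : 0 ≤ E0 := tsum_nonneg fun j => sq_nonneg _
  set M : ℝ := Real.sqrt E0 with hM_def
  have hM0 : 0 ≤ M := Real.sqrt_nonneg _
  have hMM : M * M = E0 := Real.mul_self_sqrt hE0
  have hknn : ∀ i : ℕ, 0 ≤ k i := by
    intro i
    rcases Nat.eq_zero_or_pos i with h | h
    · simp [h, hk0]
    · exact (hk i h).1
  have hkle : ∀ i : ℕ, k i ≤ C * 2^i := by
    intro i
    rcases Nat.eq_zero_or_pos i with h | h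
    · rw [h, hk0]; positivity
    · exact (hk i h).2
  have hgal := fun P : ℕ => galerkin hC hk0 hk x hx (P+1) (by omega)
  choose W hW0 hWinit hWvan hWeq hWpar hWsq using hgal
  have habs : ∀ (P n : ℕ), ∀ t ∈ Ici (0:ℝ), |W P n t| ≤ M := by
    intro P n t ht
    rw [hM_def, ← Real.sqrt_sq_eq_abs]
    exact Real.sqrt_le_sqrt (hWsq P n t ht)
  set L : ℕ → ℝ := fun n => 2*C*2^n*E0 with hL_def
  have hL0 : ∀ n, 0 ≤ L n := by intro n; rw [hL_def]; positivity
  have hprod : ∀ (P : ℕ) (a b : ℕ), ∀ r ∈ Ici (0:ℝ), |W P a r * W P b r| ≤ E0 := by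
    intro P a b r hr
    rw [abs_mul, ← hMM]
    exact mul_le_mul (habs P a r hr) (habs P b r hr) (abs_nonneg _) hM0
  have hGbound : ∀ (P n : ℕ), 1 ≤ n → ∀ r ∈ Ici (0:ℝ),
      |k (n-1) * W P (n-1) r^2 - k n * W P n r * W P (n+1) r| ≤ L n := by
    intro P n hn r hr
    have h1 : |k (n-1) * W P (n-1) r^2| ≤ C*2^n*E0 := by
      rw [abs_mul, abs_of_nonneg (hknn _), abs_pow]
      have ha : k (n-1) ≤ C*2^n := by
        refine le_trans (hkle (n-1)) ?_
        have : (2:ℝ)^(n-1) ≤ 2^n := pow_le_pow_right₀ one_le_two (by omega)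
        nlinarith
      have hb : |W P (n-1) r|^2 ≤ E0 := by
        rw [sq_abs]; exact hWsq P (n-1) r hr
      exact mul_le_mul ha hb (sq_nonneg _) (by positivity)
    have h2 : |k n * W P n r * W P (n+1) r| ≤ C*2^n*E0 := by
      rw [mul_assoc, abs_mul, abs_of_nonneg (hknn _)]
      exact mul_le_mul (hkle n) (hprod P n (n+1) r hr) (abs_nonneg _) (by positivity)
    calc |k (n-1) * W P (n-1) r^2 - k n * W P n r * W P (n+1) r|
        ≤ |k (n-1) * W P (n-1) r^2| + |k n * W P n r * W P (n+1) r| := abs_sub _ _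
      _ ≤ C*2^n*E0 + C*2^n*E0 := add_le_add h1 h2
      _ = L n := by rw [hL_def]; ring
  have hLip : ∀ (P n : ℕ), ∀ s ∈ Ici (0:ℝ), ∀ t ∈ Ici (0:ℝ),
      |W P n t - W P n s| ≤ L n * |t - s| := by
    intro P n s hs t ht
    rcases Nat.eq_zero_or_pos n with h | hn
    · subst h
      rw [hW0, hW0]
      have : (0:ℝ) ≤ L 0 * |t - s| := mul_nonneg (hL0 0) (abs_nonneg _)
      simpa using this
    rcases le_or_gt n (P+1) with hnP | hnP
    · have key := Convex.norm_image_sub_le_of_norm_hasDerivWithin_le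
        (f := W P n) (f' := fun r => k (n-1) * W P (n-1) r^2 - k n * W P n r * W P (n+1) r)
        (s := Ici (0:ℝ)) (C := L n)
        (fun r hr => hWeq P n hn hnP r hr)
        (fun r hr => by rw [Real.norm_eq_abs]; exact hGbound P n hn r hr)
        (convex_Ici 0) hs ht
      rw [Real.norm_eq_abs, Real.norm_eq_abs] at key
      exact key
    · rw [hWvan P n hnP, hWvan P n hnP]
      have : (0:ℝ) ≤ L n * |t - s| := mul_nonneg (hL0 n) (abs_nonneg _)
      simpa using this
  set KG : ℕ → ℝ := fun n => C*2^n*(2*M*L (n-1)) + C*2^n*(M*L (n+1) + M*L n) with hKG_def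
  have hKG0 : ∀ n, 0 ≤ KG n := by
    intro n
    rw [hKG_def]
    have := hL0 (n-1); have := hL0 (n+1); have := hL0 n
    positivity
  have hGlip : ∀ (P n : ℕ), 1 ≤ n → ∀ s ∈ Ici (0:ℝ), ∀ r ∈ Ici (0:ℝ),
      |(k (n-1) * W P (n-1) r^2 - k n * W P n r * W P (n+1) r)
        - (k (n-1) * W P (n-1) s^2 - k n * W P n s * W P (n+1) s)| ≤ KG n * |r - s| := by
    intro P n hn s hs r hr
    have hkn : k (n-1) ≤ C*2^n := by
      refine le_trans (hkle (n-1)) ?_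
      have : (2:ℝ)^(n-1) ≤ 2^n := pow_le_pow_right₀ one_le_two (by omega)
      nlinarith
    have p1 : |k (n-1) * (W P (n-1) r^2 - W P (n-1) s^2)| ≤ C*2^n*(2*M*L (n-1)) * |r - s| := by
      rw [abs_mul, abs_of_nonneg (hknn _)]
      have hfac : W P (n-1) r^2 - W P (n-1) s^2
          = (W P (n-1) r + W P (n-1) s) * (W P (n-1) r - W P (n-1) s) := by ring
      rw [hfac, abs_mul]
      have ha : |W P (n-1) r + W P (n-1) s| ≤ 2*M := by
        have h1 := habs P (n-1) r hr
        have h2 := habs P (n-1) s hs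
        have := abs_add_le (W P (n-1) r) (W P (n-1) s)
        linarith
      have hb := hLip P (n-1) s hs r hr
      have step : |W P (n-1) r + W P (n-1) s| * |W P (n-1) r - W P (n-1) s|
          ≤ (2*M) * (L (n-1) * |r - s|) :=
        mul_le_mul ha hb (abs_nonneg _) (by linarith [hM0])
      calc k (n-1) * (|W P (n-1) r + W P (n-1) s| * |W P (n-1) r - W P (n-1) s|)
          ≤ (C*2^n) * ((2*M) * (L (n-1) * |r - s|)) :=
            mul_le_mul hkn step (mul_nonneg (abs_nonneg _) (abs_nonneg _)) (by positivity)
        _ = C*2^n*(2*M*L (n-1)) * |r - s| := by ring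
    have p2 : |k n * (W P n r * W P (n+1) r - W P n s * W P (n+1) s)|
        ≤ C*2^n*(M*L (n+1) + M*L n) * |r - s| := by
      rw [abs_mul, abs_of_nonneg (hknn _)]
      have hfac : W P n r * W P (n+1) r - W P n s * W P (n+1) s
          = W P n r * (W P (n+1) r - W P (n+1) s) + W P (n+1) s * (W P n r - W P n s) := by
        ring
      rw [hfac]
      have t1 : |W P n r * (W P (n+1) r - W P (n+1) s)| ≤ M * (L (n+1) * |r - s|) := by
        rw [abs_mul]
        exact mul_le_mul (habs P n r hr) (hLip P (n+1) s hs r hr) (abs_nonneg _) hM0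
      have t2 : |W P (n+1) s * (W P n r - W P n s)| ≤ M * (L n * |r - s|) := by
        rw [abs_mul]
        exact mul_le_mul (habs P (n+1) s hs) (hLip P n s hs r hr) (abs_nonneg _) hM0
      have habs3 := abs_add_le (W P n r * (W P (n+1) r - W P (n+1) s))
        (W P (n+1) s * (W P n r - W P n s))
      have hsum : |W P n r * (W P (n+1) r - W P (n+1) s)
          + W P (n+1) s * (W P n r - W P n s)|
          ≤ M * (L (n+1) * |r - s|) + M * (L n * |r - s|) := by linarith
      calc k n * |W P n r * (W P (n+1) r - W P (n+1) s) + W P (n+1) s * (W P n r - W P n s)|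
          ≤ (C*2^n) * (M * (L (n+1) * |r - s|) + M * (L n * |r - s|)) :=
            mul_le_mul (hkle n) hsum (abs_nonneg _) (by positivity)
        _ = C*2^n*(M*L (n+1) + M*L n) * |r - s| := by ring
    calc |(k (n-1) * W P (n-1) r^2 - k n * W P n r * W P (n+1) r)
        - (k (n-1) * W P (n-1) s^2 - k n * W P n s * W P (n+1) s)|
        = |(k (n-1) * (W P (n-1) r^2 - W P (n-1) s^2))
          - (k n * (W P n r * W P (n+1) r - W P n s * W P (n+1) s))| := by ring_nf
      _ ≤ |k (n-1) * (W P (n-1) r^2 - W P (n-1) s^2)|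
          + |k n * (W P n r * W P (n+1) r - W P n s * W P (n+1) s)| := abs_sub _ _
      _ ≤ C*2^n*(2*M*L (n-1)) * |r - s| + C*2^n*(M*L (n+1) + M*L n) * |r - s| :=
          add_le_add p1 p2
      _ = KG n * |r - s| := by rw [hKG_def]; ring
  have habs_mem : ∀ (s t r : ℝ), r ∈ uIcc s t → |r - s| ≤ |t - s| := by
    intro s t r hr
    rcases le_total s t with h | h
    · rw [uIcc_of_le h] at hr
      rw [abs_of_nonneg (by linarith [hr.1]), abs_of_nonneg (by linarith)]
      linarith [hr.2]
    · rw [uIcc_of_ge h] at hr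
      rw [abs_sub_comm r s, abs_sub_comm t s,
        abs_of_nonneg (by linarith [hr.2]), abs_of_nonneg (by linarith)]
      linarith [hr.1]
  have hTay : ∀ (P n : ℕ), 1 ≤ n → n ≤ P+1 → ∀ s ∈ Ici (0:ℝ), ∀ t ∈ Ici (0:ℝ),
      |W P n t - W P n s
        - (t - s) * (k (n-1) * W P (n-1) s^2 - k n * W P n s * W P (n+1) s)|
        ≤ KG n * |t - s|^2 := by
    intro P n hn hnP s hs t ht
    set Gs : ℝ := k (n-1) * W P (n-1) s^2 - k n * W P n s * W P (n+1) s with hGs_def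
    have hsub : uIcc s t ⊆ Ici (0:ℝ) := fun r hr =>
      le_trans (le_min hs ht) hr.1
    have hder : ∀ r ∈ uIcc s t, HasDerivWithinAt (fun u => W P n u - u * Gs)
        ((k (n-1) * W P (n-1) r^2 - k n * W P n r * W P (n+1) r) - Gs) (uIcc s t) r := by
      intro r hr
      have h1 := (hWeq P n hn hnP r (hsub hr)).mono hsub
      have h2 : HasDerivWithinAt (fun u : ℝ => u * Gs) (1 * Gs) (uIcc s t) r :=
        (hasDerivWithinAt_id r _).mul_const Gs
      have := h1.sub h2
      rwa [one_mul] at this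
    have hbd : ∀ r ∈ uIcc s t,
        ‖(k (n-1) * W P (n-1) r^2 - k n * W P n r * W P (n+1) r) - Gs‖
          ≤ KG n * |t - s| := by
      intro r hr
      rw [Real.norm_eq_abs]
      refine le_trans (hGlip P n hn s hs r (hsub hr)) ?_
      exact mul_le_mul_of_nonneg_left (habs_mem s t r hr) (hKG0 n)
    have key := Convex.norm_image_sub_le_of_norm_hasDerivWithin_le
      hder hbd (convex_uIcc s t) (left_mem_uIcc) (right_mem_uIcc)
    rw [Real.norm_eq_abs, Real.norm_eq_abs] at key
    have heq : (W P n t - t * Gs) - (W P n s - s * Gs)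
        = W P n t - W P n s - (t - s) * Gs := by ring
    rw [heq] at key
    calc |W P n t - W P n s - (t - s) * Gs| ≤ KG n * |t - s| * |t - s| := key
      _ = KG n * |t - s|^2 := by ring
  -- the ultrafilter limit
  set U : Ultrafilter ℕ := Filter.hyperfilter ℕ with hU_def
  set X : ℕ → ℝ → ℝ := fun n t => ulim U (fun P => W P n t) with hX_def
  have hXlim : ∀ n : ℕ, ∀ t ∈ Ici (0:ℝ),
      Tendsto (fun P => W P n t) (U : Filter ℕ) (𝓝 (X n t)) :=
    fun n t ht => tendsto_ulim_of_bounded (fun P => habs P n t ht)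
  have hX0 : ∀ t, X 0 t = 0 := by
    intro t
    apply ulim_eq
    exact tendsto_const_nhds.congr (fun P => (hW0 P t).symm)
  have hXinit : ∀ n, X n 0 = x n := by
    intro n
    rcases Nat.eq_zero_or_pos n with h | h
    · rw [h, hX0 0, hx0]
    · apply ulim_eq
      have hev : ∀ᶠ P in (U : Filter ℕ), W P n 0 = x n := by
        have h1 : ∀ᶠ P in atTop, W P n 0 = x n := by
          filter_upwards [eventually_ge_atTop n] with P hP
          exact hWinit P n h (by omega)
        exact h1.filter_mono hyper_le_atTop
      refine Tendsto.congr' ?_ tendsto_const_nhds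
      filter_upwards [hev] with P hp using hp.symm
  have hXsum : ∀ t ∈ Ici (0:ℝ), ∀ K : ℕ,
      ∑ j ∈ Finset.range K, X (j+1) t ^2 ≤ E0 := by
    intro t ht K
    have h1 : Tendsto (fun P => ∑ j ∈ Finset.range K, W P (j+1) t ^2) (U : Filter ℕ)
        (𝓝 (∑ j ∈ Finset.range K, X (j+1) t ^2)) :=
      tendsto_finset_sum _ (fun j _ => (hXlim (j+1) t ht).pow 2)
    exact le_of_tendsto h1 (Eventually.of_forall (fun P => hWpar P t ht K))
  have hXsummable : ∀ t ∈ Ici (0:ℝ), Summable (fun j : ℕ => X (j+1) t ^2) :=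
    fun t ht => summable_of_sum_range_le (fun j => sq_nonneg _) (hXsum t ht)
  have hXtay : ∀ n, 1 ≤ n → ∀ s ∈ Ici (0:ℝ), ∀ t ∈ Ici (0:ℝ),
      |X n t - X n s - (t - s) * (k (n-1) * X (n-1) s^2 - k n * X n s * X (n+1) s)|
        ≤ KG n * |t - s|^2 := by
    intro n hn s hs t ht
    have h1 : Tendsto (fun P => W P n t - W P n s
        - (t - s) * (k (n-1) * W P (n-1) s^2 - k n * W P n s * W P (n+1) s)) (U : Filter ℕ)
        (𝓝 (X n t - X n s
          - (t - s) * (k (n-1) * X (n-1) s^2 - k n * X n s * X (n+1) s))) := by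
      apply Tendsto.sub
      · exact (hXlim n t ht).sub (hXlim n s hs)
      · apply Tendsto.const_mul
        apply Tendsto.sub
        · exact ((hXlim (n-1) s hs).pow 2).const_mul _
        · exact ((hXlim n s hs).const_mul _).mul (hXlim (n+1) s hs)
    apply le_of_tendsto h1.abs
    have hev : ∀ᶠ P in (U : Filter ℕ), n ≤ P + 1 :=
      ((eventually_ge_atTop n).mono (fun P hP => by omega)).filter_mono hyper_le_atTop
    filter_upwards [hev] with P hP
    exact hTay P n hn hP s hs t ht
  have hXder : ∀ n : ℕ, 1 ≤ n → ∀ t ∈ Ici (0:ℝ), HasDerivWithinAt (X n)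
      (k (n-1) * X (n-1) t^2 - k n * X n t * X (n+1) t) (Ici 0) t := by
    intro n hn t ht
    rw [hasDerivWithinAt_iff_isLittleO, Asymptotics.isLittleO_iff]
    intro c hc
    have hδ : (0:ℝ) < c / (KG n + 1) := by
      have := hKG0 n
      positivity
    have hball : Metric.ball t (c / (KG n + 1)) ∈ 𝓝[Ici 0] t :=
      nhdsWithin_le_nhds (Metric.ball_mem_nhds t hδ)
    filter_upwards [hball, self_mem_nhdsWithin] with t' ht' ht'mem
    have h1 := hXtay n hn t ht t' ht'mem
    rw [Real.norm_eq_abs, Real.norm_eq_abs, smul_eq_mul]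
    have h2 : |t' - t| * (KG n + 1) < c := by
      have h3 : dist t' t < c / (KG n + 1) := Metric.mem_ball.mp ht'
      rw [Real.dist_eq] at h3
      exact (lt_div_iff₀ (by positivity)).mp h3
    have h4 : KG n * |t' - t|^2 ≤ c * |t' - t| := by
      nlinarith [abs_nonneg (t' - t), hKG0 n, sq_nonneg (t' - t)]
    calc |X n t' - X n t - (t' - t) * (k (n-1) * X (n-1) t^2 - k n * X n t * X (n+1) t)|
        ≤ KG n * |t' - t|^2 := h1
      _ ≤ c * |t' - t| := h4
  exact ⟨X, ⟨hC, hk0, hk, hX0, hXder, hXsummable⟩, hXinit⟩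

end DyadicAux

/-- for nonnegative initial data in `l²` there exists exactly one
global solution, and it is a Leray-Hopf solution. -/
theorem wellposedness_positive_initial_condition
    (C : ℝ) (k : ℕ → ℝ) (hC : 0 < C) (hk0 : k 0 = 0)
    (hk : ∀ n : ℕ, 1 ≤ n → 0 ≤ k n ∧ k n ≤ C * 2 ^ n)
    (x : ℕ → ℝ) (hx0 : x 0 = 0) (hx : Summable fun j : ℕ => x (j + 1) ^ 2)
    (hpos : ∀ n : ℕ, 0 ≤ x n) :
    (∃ X : ℕ → ℝ → ℝ,
      IsDyadicSolutionOn C k X (Set.Ici 0) ∧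
      (∀ n : ℕ, X n 0 = x n) ∧
      (∀ s ∈ Set.Ici (0 : ℝ), ∀ t ∈ Set.Ici (0 : ℝ), s < t →
        energy X t ≤ energy X s)) ∧
    (∀ X Y : ℕ → ℝ → ℝ,
      IsDyadicSolutionOn C k X (Set.Ici 0) → (∀ n : ℕ, X n 0 = x n) →
      IsDyadicSolutionOn C k Y (Set.Ici 0) → (∀ n : ℕ, Y n 0 = x n) →
      ∀ n : ℕ, ∀ t ∈ Set.Ici (0 : ℝ), X n t = Y n t) := by
  constructor
  · obtain ⟨X, hsol, hinit⟩ := DyadicAux.existence hC hk0 hk x hx0 hx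
    have h0 : ∀ n, 0 ≤ X n 0 := fun n => (hinit n) ▸ hpos n
    have hnn := DyadicAux.nonneg hsol h0
    exact ⟨X, hsol, hinit, fun s hs t ht hst =>
      DyadicAux.energy_mono hsol hnn s hs t ht (le_of_lt hst)⟩
  · intro X Y hX hXi hY hYi n t ht
    exact DyadicAux.uniqueness hX hY (fun m => by rw [hXi m, hYi m])
      (fun m => (hXi m) ▸ hpos m) n t ht
end

section
/- Let x ∈ l^2 be such that x_n < 0 for at most finitely many n. Then any two global Leray-Hopf solutions of the inviscid dyadic model with initial condition x coincide. -/
open MeasureTheory Set Filter Topology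

namespace DyadicUniqAux

/-- The key algebraic telescoping identity for the weighted difference of two solutions. -/
lemma key_identity (k x y : ℕ → ℝ) (hk0 : k 0 = 0) (hx0 : x 0 = 0) (hy0 : y 0 = 0) :
    ∀ N : ℕ,
    ∑ n ∈ Finset.range N, (2:ℝ)⁻¹ ^ (n+1) *
      (2 * (x (n+1) - y (n+1)) *
        ((k n * x n ^ 2 - k (n+1) * x (n+1) * x (n+2))
          - (k n * y n ^ 2 - k (n+1) * y (n+1) * y (n+2))))
    = -((2:ℝ)⁻¹ ^ N * k N * (x N + y N) * (x N - y N) * (x (N+1) - y (N+1)))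
      - ∑ n ∈ Finset.range N, (2:ℝ)⁻¹ ^ (n+1) * k (n+1) * (x (n+2) + y (n+2)) *
          (x (n+1) - y (n+1)) ^ 2 := by
  intro N
  induction N with
  | zero => simp [hk0]
  | succ N ih =>
    rw [Finset.sum_range_succ, Finset.sum_range_succ, ih, pow_succ]
    ring

/-- Each component of a solution is continuous on `[0, ∞)`. -/
lemma contOn {C : ℝ} {k : ℕ → ℝ} {X : ℕ → ℝ → ℝ}
    (h : IsDyadicSolutionOn C k X (Set.Ici 0)) (n : ℕ) :
    ContinuousOn (X n) (Set.Ici 0) := by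
  rcases Nat.eq_zero_or_pos n with rfl | hn
  · have : X 0 = fun _ => (0:ℝ) := funext h.2.2.2.1
    rw [this]; exact continuousOn_const
  · exact fun t ht => (h.2.2.2.2.1 n hn t ht).continuousWithinAt

/-- Positivity is preserved: if a component starts nonnegative it stays nonnegative. -/
lemma nonneg_preserved {C : ℝ} {k : ℕ → ℝ} {X : ℕ → ℝ → ℝ}
    (h : IsDyadicSolutionOn C k X (Set.Ici 0)) (n : ℕ) (hn : 1 ≤ n)
    (h0 : 0 ≤ X n 0) {t : ℝ} (ht : 0 ≤ t) : 0 ≤ X n t := by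
  obtain ⟨hC, hk0, hkb, hX0, hder, hsum⟩ := id h
  have hknn : 0 ≤ k (n-1) := by
    rcases Nat.eq_zero_or_pos (n-1) with h' | h'
    · rw [h', hk0]
    · exact (hkb _ h').1
  set g : ℝ → ℝ := fun s => k n * X (n+1) (max s 0) with hg
  have hgc : Continuous g := by
    refine continuous_const.mul ?_
    exact (contOn h (n+1)).comp_continuous (continuous_id.max continuous_const)
      (fun s => Set.mem_Ici.2 (le_max_right _ _))
  set A : ℝ → ℝ := fun u => ∫ s in (0:ℝ)..u, g s with hA
  have hAd : ∀ u, HasDerivAt A (g u) u := fun u =>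
    (hgc.integral_hasStrictDerivAt 0 u).hasDerivAt
  have hAc : Continuous A := by
    refine continuous_iff_continuousAt.2 fun u => (hAd u).continuousAt
  set y : ℝ → ℝ := fun u => X n u * Real.exp (A u) with hy
  have hmono : MonotoneOn y (Set.Ici 0) := by
    apply monotoneOn_of_deriv_nonneg (convex_Ici 0)
    · exact (contOn h n).mul (Real.continuous_exp.comp hAc).continuousOn
    · rw [interior_Ici]
      intro x hx
      have hx0 : (0:ℝ) ≤ x := le_of_lt hx
      have hXd : HasDerivAt (X n)
          (k (n - 1) * X (n - 1) x ^ 2 - k n * X n x * X (n + 1) x) x :=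
        (hder n hn x hx0).hasDerivAt (Ici_mem_nhds hx)
      exact ((hXd.mul ((hAd x).exp)).differentiableAt).differentiableWithinAt
    · rw [interior_Ici]
      intro x hx
      have hx0 : (0:ℝ) ≤ x := le_of_lt hx
      have hXd : HasDerivAt (X n)
          (k (n - 1) * X (n - 1) x ^ 2 - k n * X n x * X (n + 1) x) x :=
        (hder n hn x hx0).hasDerivAt (Ici_mem_nhds hx)
      have hyd : HasDerivAt y
          ((k (n - 1) * X (n - 1) x ^ 2 - k n * X n x * X (n + 1) x) * Real.exp (A x)
            + X n x * (Real.exp (A x) * g x)) x := hXd.mul ((hAd x).exp)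
      rw [hyd.deriv]
      have hgx : g x = k n * X (n+1) x := by rw [hg]; simp [max_eq_left hx0]
      rw [hgx]
      have : (k (n - 1) * X (n - 1) x ^ 2 - k n * X n x * X (n + 1) x) * Real.exp (A x)
            + X n x * (Real.exp (A x) * (k n * X (n+1) x))
          = Real.exp (A x) * (k (n-1) * X (n-1) x ^ 2) := by ring
      rw [this]
      positivity
  have h1 : y 0 ≤ y t := hmono self_mem_Ici ht ht
  have h2 : 0 ≤ y 0 := mul_nonneg h0 (Real.exp_pos _).le
  have h3 : 0 ≤ X n t * Real.exp (A t) := le_trans h2 h1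
  nlinarith [Real.exp_pos (A t)]

end DyadicUniqAux

set_option maxHeartbeats 2000000 in
open DyadicUniqAux in
/-- if the initial condition has at most finitely many negative
components, any two global Leray-Hopf solutions starting from it coincide. -/
theorem uniqueness_LerayHopf_finitely_many_negatives
    (C : ℝ) (k : ℕ → ℝ) (X₁ X₂ : ℕ → ℝ → ℝ)
    (h₁ : IsDyadicSolutionOn C k X₁ (Set.Ici 0))
    (h₂ : IsDyadicSolutionOn C k X₂ (Set.Ici 0))
    (hinit : ∀ n : ℕ, X₁ n 0 = X₂ n 0)
    (hfin : {n : ℕ | X₁ n 0 < 0}.Finite)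
    (hLH₁ : ∀ s ∈ Set.Ici (0 : ℝ), ∀ t ∈ Set.Ici (0 : ℝ), s < t →
      energy X₁ t ≤ energy X₁ s)
    (hLH₂ : ∀ s ∈ Set.Ici (0 : ℝ), ∀ t ∈ Set.Ici (0 : ℝ), s < t →
      energy X₂ t ≤ energy X₂ s) :
    ∀ n : ℕ, ∀ t ∈ Set.Ici (0 : ℝ), X₁ n t = X₂ n t := by
  obtain ⟨hC, hk0, hkb, hX10, hder1, hsum1⟩ := id h₁
  obtain ⟨-, -, -, hX20, hder2, hsum2⟩ := id h₂
  -- energy bounds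
  set E0 := energy X₁ 0 with hE0def
  have hE0nn : 0 ≤ E0 := tsum_nonneg fun j => sq_nonneg _
  have hE20 : energy X₂ 0 = E0 := by
    rw [hE0def]; unfold energy; exact tsum_congr fun j => by rw [hinit]
  have hEb1 : ∀ t : ℝ, 0 ≤ t → energy X₁ t ≤ E0 := by
    intro t ht
    rcases eq_or_lt_of_le ht with h | h
    · rw [← h]
    · exact hLH₁ 0 self_mem_Ici t (le_of_lt h) h
  have hEb2 : ∀ t : ℝ, 0 ≤ t → energy X₂ t ≤ E0 := by
    intro t ht
    rcases eq_or_lt_of_le ht with h | h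
    · rw [← h, hE20]
    · exact le_trans (hLH₂ 0 self_mem_Ici t (le_of_lt h) h) (le_of_eq hE20)
  have hsq1 : ∀ m : ℕ, ∀ t : ℝ, 0 ≤ t → X₁ (m+1) t ^ 2 ≤ E0 := by
    intro m t ht
    have h1 : X₁ (m+1) t ^ 2 ≤ ∑' j : ℕ, X₁ (j+1) t ^ 2 :=
      Summable.le_tsum (hsum1 t ht) m fun j _ => sq_nonneg _
    exact le_trans h1 (hEb1 t ht)
  have hsq2 : ∀ m : ℕ, ∀ t : ℝ, 0 ≤ t → X₂ (m+1) t ^ 2 ≤ E0 := by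
    intro m t ht
    have h1 : X₂ (m+1) t ^ 2 ≤ ∑' j : ℕ, X₂ (j+1) t ^ 2 :=
      Summable.le_tsum (hsum2 t ht) m fun j _ => sq_nonneg _
    exact le_trans h1 (hEb2 t ht)
  set R := Real.sqrt E0 with hRdef
  have hRnn : 0 ≤ R := Real.sqrt_nonneg _
  have hR2 : R ^ 2 = E0 := Real.sq_sqrt hE0nn
  have habs1 : ∀ m : ℕ, ∀ t : ℝ, 0 ≤ t → |X₁ (m+1) t| ≤ R := by
    intro m t ht
    rw [← Real.sqrt_sq_eq_abs]
    exact Real.sqrt_le_sqrt (hsq1 m t ht)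
  have habs2 : ∀ m : ℕ, ∀ t : ℝ, 0 ≤ t → |X₂ (m+1) t| ≤ R := by
    intro m t ht
    rw [← Real.sqrt_sq_eq_abs]
    exact Real.sqrt_le_sqrt (hsq2 m t ht)
  -- the largest index with negative initial datum
  obtain ⟨n₀, hn₀⟩ := hfin.bddAbove
  have hpos : ∀ m : ℕ, n₀ < m → ∀ t : ℝ, 0 ≤ t → 0 ≤ X₁ m t ∧ 0 ≤ X₂ m t := by
    intro m hm t ht
    have hm1 : 1 ≤ m := by
      rcases Nat.eq_zero_or_pos m with rfl | h; · omega
      · exact h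
    have h10 : 0 ≤ X₁ m 0 := by
      by_contra hneg
      push_neg at hneg
      have : m ≤ n₀ := hn₀ (show m ∈ {n : ℕ | X₁ n 0 < 0} from hneg)
      omega
    have h20 : 0 ≤ X₂ m 0 := by rw [← hinit m]; exact h10
    exact ⟨nonneg_preserved h₁ m hm1 h10 ht, nonneg_preserved h₂ m hm1 h20 ht⟩
  -- the Gronwall constant
  set K := C * 2 ^ n₀ * (2 * R) with hKdef
  have hKnn : 0 ≤ K := by positivity
  have hKb : ∀ m : ℕ, 1 ≤ m → ∀ t : ℝ, 0 ≤ t →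
      -(k m * (X₁ (m+1) t + X₂ (m+1) t)) ≤ K := by
    intro m hm t ht
    rcases le_or_gt (m+1) n₀ with hle | hlt
    · obtain ⟨j, hj⟩ : ∃ j, m = j + 1 := ⟨m - 1, by omega⟩
      have h1 := abs_le.1 (habs1 m t ht)
      have h2 := abs_le.1 (habs2 m t ht)
      have hkm := hkb m hm
      have hC2 : k m ≤ C * 2 ^ n₀ := by
        refine le_trans hkm.2 ?_
        have : (2:ℝ) ^ m ≤ 2 ^ n₀ := by
          apply pow_le_pow_right₀ (by norm_num) (by omega)
        nlinarith
      have hs : -(X₁ (m+1) t + X₂ (m+1) t) ≤ 2 * R := by linarith [h1.1, h2.1]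
      calc -(k m * (X₁ (m+1) t + X₂ (m+1) t))
          = k m * (-(X₁ (m+1) t + X₂ (m+1) t)) := by ring
        _ ≤ k m * (2 * R) := by
            apply mul_le_mul_of_nonneg_left hs hkm.1
        _ ≤ C * 2 ^ n₀ * (2 * R) := by
            apply mul_le_mul_of_nonneg_right hC2 (by positivity)
        _ = K := by rw [hKdef]
    · have hp := hpos (m+1) hlt t ht
      have hkm := (hkb m hm).1
      have : 0 ≤ k m * (X₁ (m+1) t + X₂ (m+1) t) :=
        mul_nonneg hkm (by linarith [hp.1, hp.2])
      linarith
  -- the difference and the weighted quantity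
  set F : ℕ → ℝ → ℝ := fun m t => X₁ m t - X₂ m t with hFdef
  have hFbd : ∀ m : ℕ, ∀ t : ℝ, 0 ≤ t → F (m+1) t ^ 2 ≤ 4 * E0 := by
    intro m t ht
    have h1 := hsq1 m t ht
    have h2 := hsq2 m t ht
    have hFeq : F (m+1) t = X₁ (m+1) t - X₂ (m+1) t := rfl
    have : F (m+1) t ^ 2 ≤ 2 * X₁ (m+1) t ^ 2 + 2 * X₂ (m+1) t ^ 2 := by
      rw [hFeq]; nlinarith [sq_nonneg (X₁ (m+1) t + X₂ (m+1) t)]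
    linarith
  have hFabs : ∀ m : ℕ, ∀ t : ℝ, 0 ≤ t → |F m t| ≤ 2 * R := by
    intro m t ht
    rcases Nat.eq_zero_or_pos m with rfl | hm
    · simp [hFdef, hX10, hX20]; positivity
    · obtain ⟨j, rfl⟩ : ∃ j, m = j + 1 := ⟨m - 1, by omega⟩
      rw [hFdef]
      calc |X₁ (j+1) t - X₂ (j+1) t| ≤ |X₁ (j+1) t| + |X₂ (j+1) t| := abs_sub _ _
        _ ≤ 2 * R := by linarith [habs1 j t ht, habs2 j t ht]
  have hFcont : ∀ m : ℕ, ContinuousOn (F m) (Set.Ici 0) := fun m =>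
    (contOn h₁ m).sub (contOn h₂ m)
  have hF0 : ∀ m : ℕ, F m 0 = 0 := fun m => by rw [hFdef]; simp [hinit m]
  set w : ℕ → ℝ := fun n => (2:ℝ)⁻¹ ^ n with hwdef
  have hwpos : ∀ n, 0 < w n := fun n => by rw [hwdef]; positivity
  have hgeom : Summable fun n : ℕ => w (n+1) * (4 * E0) := by
    apply Summable.mul_right
    have : Summable fun n : ℕ => (2:ℝ)⁻¹ ^ n :=
      summable_geometric_of_lt_one (by norm_num) (by norm_num)
    have h2 := this.mul_right (2:ℝ)⁻¹
    refine h2.congr fun n => ?_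
    simp only [hwdef, pow_succ]
  set Φ : ℝ → ℝ := fun t => ∑' n : ℕ, w (n+1) * F (n+1) (max t 0) ^ 2 with hΦdef
  have hsummΦ : ∀ t : ℝ, Summable fun n : ℕ => w (n+1) * F (n+1) (max t 0) ^ 2 := by
    intro t
    apply Summable.of_nonneg_of_le (fun n => by positivity) (fun n => ?_) hgeom
    exact mul_le_mul_of_nonneg_left (hFbd n _ (le_max_right _ _)) (hwpos _).le
  have hΦcont : Continuous Φ := by
    rw [hΦdef]
    apply continuous_tsum (u := fun n : ℕ => w (n+1) * (4 * E0)) ?_ hgeom ?_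
    · intro n
      refine continuous_const.mul ?_
      have hc : Continuous fun t : ℝ => F (n+1) (max t 0) :=
        (hFcont (n+1)).comp_continuous (continuous_id.max continuous_const)
          (fun t => Set.mem_Ici.2 (le_max_right _ _))
      exact hc.pow 2
    · intro n t
      rw [Real.norm_eq_abs, abs_of_nonneg (by positivity)]
      exact mul_le_mul_of_nonneg_left (hFbd n _ (le_max_right _ _)) (hwpos _).le
  have hΦnn : ∀ t, 0 ≤ Φ t := fun t => tsum_nonneg fun n => by positivity
  -- partial sums and their derivatives
  set Φp : ℕ → ℝ → ℝ := fun N t => ∑ n ∈ Finset.range N, w (n+1) * F (n+1) t ^ 2 with hΦpdef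
  set G : ℕ → ℝ → ℝ := fun N t =>
    -(w N * k N * (X₁ N t + X₂ N t) * F N t * F (N+1) t)
    - ∑ n ∈ Finset.range N, w (n+1) * k (n+1) * (X₁ (n+2) t + X₂ (n+2) t) * F (n+1) t ^ 2
    with hGdef
  have hderΦp : ∀ N : ℕ, ∀ t : ℝ, 0 ≤ t →
      HasDerivWithinAt (Φp N) (G N t) (Set.Ici 0) t := by
    intro N t ht
    have hterm : ∀ n ∈ Finset.range N,
        HasDerivWithinAt (fun u => w (n+1) * F (n+1) u ^ 2)
          (w (n+1) * (2 * F (n+1) t *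
            ((k n * X₁ n t ^ 2 - k (n+1) * X₁ (n+1) t * X₁ (n+2) t)
              - (k n * X₂ n t ^ 2 - k (n+1) * X₂ (n+1) t * X₂ (n+2) t)))) (Set.Ici 0) t := by
      intro n _
      have h1 := hder1 (n+1) (by omega) t ht
      have h2 := hder2 (n+1) (by omega) t ht
      simp only [Nat.add_sub_cancel] at h1 h2
      have hd := ((h1.sub h2).pow 2).const_mul (w (n+1))
      refine hd.congr_deriv ?_
      rw [hFdef]
      push_cast
      simp only [Pi.sub_apply]
      ring
    have hsum := HasDerivWithinAt.fun_sum hterm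
    have hkey := key_identity k (fun m => X₁ m t) (fun m => X₂ m t) hk0 (hX10 t) (hX20 t) N
    have hGN : G N t = ∑ n ∈ Finset.range N,
        (w (n+1) * (2 * F (n+1) t *
          ((k n * X₁ n t ^ 2 - k (n+1) * X₁ (n+1) t * X₁ (n+2) t)
            - (k n * X₂ n t ^ 2 - k (n+1) * X₂ (n+1) t * X₂ (n+2) t)))) := by
      rw [hGdef]
      simp only [hwdef, hFdef]
      rw [hkey]
    rw [hGN]
    exact hsum
  have hΦpcont : ∀ N : ℕ, ContinuousOn (Φp N) (Set.Ici 0) := fun N t ht =>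
    (hderΦp N t ht).continuousWithinAt
  have hGcont : ∀ N : ℕ, ContinuousOn (G N) (Set.Ici 0) := by
    intro N
    rw [hGdef]
    apply ContinuousOn.sub
    · apply ContinuousOn.neg
      exact ((((continuousOn_const.mul ((contOn h₁ N).add (contOn h₂ N))).mul
        (hFcont N))).mul (hFcont (N+1)))
    · apply continuousOn_finset_sum
      intro n _
      exact (continuousOn_const.mul ((contOn h₁ (n+2)).add (contOn h₂ (n+2)))).mul
        ((hFcont (n+1)).pow 2)
  have hFTC : ∀ N : ℕ, ∀ t : ℝ, 0 ≤ t → Φp N t = ∫ s in (0:ℝ)..t, G N s := by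
    intro N t ht
    have hIcc : Set.Icc (0:ℝ) t ⊆ Set.Ici 0 := fun x hx => hx.1
    have h0 : Φp N 0 = 0 := by
      rw [hΦpdef]
      apply Finset.sum_eq_zero
      intro n _
      rw [hF0 (n+1)]
      ring
    have hint : IntervalIntegrable (G N) volume 0 t := by
      apply ContinuousOn.intervalIntegrable
      apply (hGcont N).mono
      rw [uIcc_of_le ht]
      exact hIcc
    have := intervalIntegral.integral_eq_sub_of_hasDeriv_right_of_le ht
      ((hΦpcont N).mono hIcc)
      (fun x hx => (hderΦp N x hx.1.le).mono
        (fun y (hy : y ∈ Set.Ioi x) => le_of_lt (lt_trans hx.1 hy)))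
      hint
    rw [this, h0, sub_zero]
  -- the pointwise inequality on the derivative
  have hwk : ∀ N : ℕ, w N * k N ≤ C := by
    intro N
    rcases Nat.eq_zero_or_pos N with rfl | hN
    · rw [hk0]; simpa using hC.le
    · calc w N * k N ≤ w N * (C * 2 ^ N) :=
          mul_le_mul_of_nonneg_left (hkb N hN).2 (hwpos N).le
        _ = C * ((2:ℝ)⁻¹ * 2) ^ N := by rw [hwdef, mul_pow]; ring
        _ = C := by norm_num
  have hwknn : ∀ N : ℕ, 0 ≤ w N * k N := by
    intro N
    rcases Nat.eq_zero_or_pos N with rfl | hN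
    · rw [hk0]; simp
    · exact mul_nonneg (hwpos N).le (hkb N hN).1
  have hGle : ∀ N : ℕ, ∀ s : ℝ, 0 ≤ s →
      G N s ≤ 4 * C * R ^ 2 * |F N s| + K * Φ s := by
    intro N s hs
    have hmax : max s 0 = s := max_eq_left hs
    have h1 : -(w N * k N * (X₁ N s + X₂ N s) * F N s * F (N+1) s)
        ≤ 4 * C * R ^ 2 * |F N s| := by
      have hP : |w N * k N * (X₁ N s + X₂ N s) * F (N+1) s| ≤ 4 * C * R ^ 2 := by
        have hSb : |X₁ N s + X₂ N s| ≤ 2 * R := by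
          rcases Nat.eq_zero_or_pos N with rfl | hN
          · simp [hX10, hX20]; positivity
          · obtain ⟨j, rfl⟩ : ∃ j, N = j + 1 := ⟨N - 1, by omega⟩
            calc |X₁ (j+1) s + X₂ (j+1) s| ≤ |X₁ (j+1) s| + |X₂ (j+1) s| := abs_add_le _ _
              _ ≤ 2 * R := by linarith [habs1 j s hs, habs2 j s hs]
        have hFb := hFabs (N+1) s hs
        calc |w N * k N * (X₁ N s + X₂ N s) * F (N+1) s|
            = |w N * k N| * |X₁ N s + X₂ N s| * |F (N+1) s| := by
              rw [abs_mul, abs_mul]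
          _ ≤ C * (2 * R) * (2 * R) := by
              have h0 : |w N * k N| = w N * k N := abs_of_nonneg (hwknn N)
              rw [h0]
              have hab : w N * k N * |X₁ N s + X₂ N s| ≤ C * (2 * R) :=
                mul_le_mul (hwk N) hSb (abs_nonneg _) hC.le
              exact mul_le_mul hab hFb (abs_nonneg _) (by positivity)
          _ = 4 * C * R ^ 2 := by ring
      calc -(w N * k N * (X₁ N s + X₂ N s) * F N s * F (N+1) s)
          = -((w N * k N * (X₁ N s + X₂ N s) * F (N+1) s) * F N s) := by ring
        _ ≤ |(w N * k N * (X₁ N s + X₂ N s) * F (N+1) s) * F N s| := neg_le_abs _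
        _ = |w N * k N * (X₁ N s + X₂ N s) * F (N+1) s| * |F N s| := abs_mul _ _
        _ ≤ 4 * C * R ^ 2 * |F N s| := mul_le_mul_of_nonneg_right hP (abs_nonneg _)
    have h2 : -(∑ n ∈ Finset.range N,
        w (n+1) * k (n+1) * (X₁ (n+2) s + X₂ (n+2) s) * F (n+1) s ^ 2) ≤ K * Φ s := by
      have hter : ∀ n ∈ Finset.range N,
          -(w (n+1) * k (n+1) * (X₁ (n+2) s + X₂ (n+2) s) * F (n+1) s ^ 2)
            ≤ K * (w (n+1) * F (n+1) s ^ 2) := by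
        intro n _
        have hx := hKb (n+1) (by omega) s hs
        have hnn : (0:ℝ) ≤ w (n+1) * F (n+1) s ^ 2 := by positivity
        calc -(w (n+1) * k (n+1) * (X₁ (n+2) s + X₂ (n+2) s) * F (n+1) s ^ 2)
            = (w (n+1) * F (n+1) s ^ 2) * (-(k (n+1) * (X₁ (n+2) s + X₂ (n+2) s))) := by ring
          _ ≤ (w (n+1) * F (n+1) s ^ 2) * K := mul_le_mul_of_nonneg_left hx hnn
          _ = K * (w (n+1) * F (n+1) s ^ 2) := by ring
      calc -(∑ n ∈ Finset.range N,
          w (n+1) * k (n+1) * (X₁ (n+2) s + X₂ (n+2) s) * F (n+1) s ^ 2)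
          = ∑ n ∈ Finset.range N,
            -(w (n+1) * k (n+1) * (X₁ (n+2) s + X₂ (n+2) s) * F (n+1) s ^ 2) := by
            rw [Finset.sum_neg_distrib]
        _ ≤ ∑ n ∈ Finset.range N, K * (w (n+1) * F (n+1) s ^ 2) := Finset.sum_le_sum hter
        _ = K * ∑ n ∈ Finset.range N, w (n+1) * F (n+1) s ^ 2 := by rw [Finset.mul_sum]
        _ ≤ K * Φ s := by
            apply mul_le_mul_of_nonneg_left ?_ hKnn
            rw [hΦdef]
            simp only [hmax]
            exact Summable.sum_le_tsum (Finset.range N) (fun n _ => by positivity)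
              (by simpa [hmax] using hsummΦ s)
    calc G N s = -(w N * k N * (X₁ N s + X₂ N s) * F N s * F (N+1) s)
          + -(∑ n ∈ Finset.range N,
              w (n+1) * k (n+1) * (X₁ (n+2) s + X₂ (n+2) s) * F (n+1) s ^ 2) := by
          rw [hGdef]; ring
      _ ≤ 4 * C * R ^ 2 * |F N s| + K * Φ s := add_le_add h1 h2
  -- the main integral inequality, by taking N → ∞
  have hmain : ∀ t : ℝ, 0 ≤ t → Φ t ≤ K * ∫ s in (0:ℝ)..t, Φ s := by
    intro t ht
    have hIcc : Set.Icc (0:ℝ) t ⊆ Set.Ici 0 := fun x hx => hx.1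
    have huIcc : Set.uIcc (0:ℝ) t = Set.Icc 0 t := uIcc_of_le ht
    have hΦint : IntervalIntegrable Φ volume 0 t := hΦcont.intervalIntegrable 0 t
    have hFNint : ∀ N : ℕ, IntervalIntegrable (fun s => |F N s|) volume 0 t := by
      intro N
      apply ContinuousOn.intervalIntegrable
      apply ContinuousOn.mono ((hFcont N).abs)
      rw [huIcc]; exact hIcc
    have step : ∀ N : ℕ, Φp N t ≤
        4 * C * R ^ 2 * (∫ s in (0:ℝ)..t, |F N s|) + K * ∫ s in (0:ℝ)..t, Φ s := by
      intro N
      rw [hFTC N t ht]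
      have hGint : IntervalIntegrable (G N) volume 0 t := by
        apply ContinuousOn.intervalIntegrable
        apply (hGcont N).mono
        rw [huIcc]; exact hIcc
      have hRHSint : IntervalIntegrable
          (fun s => 4 * C * R ^ 2 * |F N s| + K * Φ s) volume 0 t :=
        ((hFNint N).const_mul _).add (hΦint.const_mul _)
      calc (∫ s in (0:ℝ)..t, G N s)
          ≤ ∫ s in (0:ℝ)..t, (4 * C * R ^ 2 * |F N s| + K * Φ s) :=
            intervalIntegral.integral_mono_on ht hGint hRHSint
              (fun s hsI => hGle N s hsI.1)
        _ = 4 * C * R ^ 2 * (∫ s in (0:ℝ)..t, |F N s|) + K * ∫ s in (0:ℝ)..t, Φ s := by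
            rw [intervalIntegral.integral_add ((hFNint N).const_mul _) (hΦint.const_mul _),
              intervalIntegral.integral_const_mul, intervalIntegral.integral_const_mul]
    have hlim1 : Tendsto (fun N => Φp N t) atTop (𝓝 (Φ t)) := by
      have hh := (hsummΦ t).hasSum.tendsto_sum_nat
      rw [hΦdef]
      simp only [hΦpdef, max_eq_left ht] at hh ⊢
      exact hh
    have hlim2' : Tendsto (fun N => ∫ s in (0:ℝ)..t, |F N s|) atTop
        (𝓝 (∫ s in (0:ℝ)..t, (0:ℝ))) := by
      apply intervalIntegral.tendsto_integral_filter_of_dominated_convergence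
        (fun _ => 2 * R)
      · apply Eventually.of_forall
        intro N
        apply ContinuousOn.aestronglyMeasurable ?_ measurableSet_uIoc
        apply ContinuousOn.mono ((hFcont N).abs)
        rw [uIoc_of_le ht]
        exact fun x hx => le_of_lt hx.1
      · apply Eventually.of_forall
        intro N
        apply ae_of_all
        intro x hx
        rw [uIoc_of_le ht] at hx
        rw [Real.norm_eq_abs, abs_abs]
        exact hFabs N x hx.1.le
      · exact intervalIntegrable_const
      · apply ae_of_all
        intro x hx
        rw [uIoc_of_le ht] at hx
        have hx0 : (0:ℝ) ≤ x := hx.1.le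
        have hsumF : Summable fun m : ℕ => F (m+1) x ^ 2 := by
          apply Summable.of_nonneg_of_le (fun _ => sq_nonneg _) (fun m => ?_)
            (((hsum1 x hx0).mul_left 2).add ((hsum2 x hx0).mul_left 2))
          have hFeq : F (m+1) x = X₁ (m+1) x - X₂ (m+1) x := rfl
          rw [hFeq]
          nlinarith [sq_nonneg (X₁ (m+1) x + X₂ (m+1) x)]
        have h1 : Tendsto (fun m : ℕ => F (m+1) x ^ 2) atTop (𝓝 0) :=
          hsumF.tendsto_atTop_zero
        have h2 : Tendsto (fun N : ℕ => F N x ^ 2) atTop (𝓝 0) :=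
          (tendsto_add_atTop_iff_nat 1).1 h1
        have h3 : Tendsto (fun N : ℕ => Real.sqrt (F N x ^ 2)) atTop (𝓝 (Real.sqrt 0)) :=
          (Real.continuous_sqrt.tendsto 0).comp h2
        simp only [Real.sqrt_sq_eq_abs, Real.sqrt_zero] at h3
        exact h3
    have hlim2 : Tendsto (fun N => ∫ s in (0:ℝ)..t, |F N s|) atTop (𝓝 0) := by
      simpa using hlim2'
    have hlimR : Tendsto (fun N =>
        4 * C * R ^ 2 * (∫ s in (0:ℝ)..t, |F N s|) + K * ∫ s in (0:ℝ)..t, Φ s) atTop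
        (𝓝 (4 * C * R ^ 2 * 0 + K * ∫ s in (0:ℝ)..t, Φ s)) :=
      ((hlim2.const_mul _)).add tendsto_const_nhds
    have := le_of_tendsto_of_tendsto' hlim1 hlimR step
    simpa using this
  -- Gronwall: the integral of Φ vanishes, hence Φ vanishes
  set I : ℝ → ℝ := fun u => ∫ s in (0:ℝ)..u, Φ s with hIdef
  have hId : ∀ u : ℝ, HasDerivAt I (Φ u) u := fun u =>
    (hΦcont.integral_hasStrictDerivAt 0 u).hasDerivAt
  have hI0 : ∀ t : ℝ, 0 ≤ t → I t = 0 := by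
    intro t ht
    set ψ : ℝ → ℝ := fun u => I u * Real.exp (-K * u) with hψdef
    have hψd : ∀ u : ℝ, HasDerivAt ψ
        (Φ u * Real.exp (-K * u) + I u * (Real.exp (-K * u) * (-K * 1))) u := by
      intro u
      exact (hId u).mul (((hasDerivAt_id u).const_mul (-K)).exp)
    have hanti : AntitoneOn ψ (Set.Ici 0) := by
      apply antitoneOn_of_deriv_nonpos (convex_Ici 0)
      · exact fun x _ => (hψd x).continuousAt.continuousWithinAt
      · exact fun x _ => (hψd x).differentiableAt.differentiableWithinAt
      · intro x hx
        rw [interior_Ici] at hx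
        rw [(hψd x).deriv]
        have hm := hmain x (le_of_lt hx)
        have he := Real.exp_pos (-K * x)
        nlinarith
    have h1 : ψ t ≤ ψ 0 := hanti self_mem_Ici ht ht
    have hψ0 : ψ 0 = 0 := by
      rw [hψdef]
      simp [hIdef]
    have hInn : 0 ≤ I t := by
      rw [hIdef]
      apply intervalIntegral.integral_nonneg ht
      exact fun s _ => hΦnn s
    rw [hψ0] at h1
    have h1' : I t * Real.exp (-K * t) ≤ 0 := h1
    have he := Real.exp_pos (-K * t)
    have hIt : I t ≤ 0 := by
      by_contra hc
      push_neg at hc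
      nlinarith [h1']
    linarith
  have hΦ0 : ∀ t : ℝ, 0 ≤ t → Φ t = 0 := by
    intro t ht
    have h1 : Φ t ≤ K * I t := hmain t ht
    rw [hI0 t ht] at h1
    have := hΦnn t
    linarith [h1]
  -- conclusion
  intro n t ht
  have ht' : (0:ℝ) ≤ t := ht
  rcases Nat.eq_zero_or_pos n with rfl | hn
  · rw [hX10 t, hX20 t]
  · obtain ⟨m, rfl⟩ : ∃ m, n = m + 1 := ⟨n - 1, by omega⟩
    have hterm : w (m+1) * F (m+1) (max t 0) ^ 2 ≤ Φ t :=
      Summable.le_tsum (hsummΦ t) m fun j _ => by positivity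
    rw [hΦ0 t ht', max_eq_left ht'] at hterm
    have hnn : 0 ≤ w (m+1) * F (m+1) t ^ 2 := by positivity
    have hz : w (m+1) * F (m+1) t ^ 2 = 0 := le_antisymm hterm hnn
    have hF2 : F (m+1) t ^ 2 = 0 := by
      have := hwpos (m+1)
      by_contra hc
      have h2 : 0 < F (m+1) t ^ 2 := lt_of_le_of_ne (sq_nonneg _) (Ne.symm hc)
      nlinarith
    have : F (m+1) t = 0 := by
      have := sq_eq_zero_iff.1 hF2
      exact this
    have hFeq : F (m+1) t = X₁ (m+1) t - X₂ (m+1) t := rfl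
    rw [hFeq] at this
    linarith [this]
end

section
/- Let X be a solution of the inviscid dyadic model on [0,T), let j ≥ 1 and let 0 ≤ s ≤ t < T. If X_j(s) ≥ 0 then X_j(t) ≥ 0. -/
open MeasureTheory Set Filter Topology

/-- nonnegativity of a component is preserved forward in time. -/
theorem component_nonneg_invariant
    (C : ℝ) (k : ℕ → ℝ) (X : ℕ → ℝ → ℝ) (T : ℝ)
    (hX : IsDyadicSolutionOn C k X (Set.Ico 0 T))
    (j : ℕ) (hj : 1 ≤ j) (s t : ℝ) (hs : 0 ≤ s) (hst : s ≤ t) (ht : t < T)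
    (hsign : 0 ≤ X j s) :
    0 ≤ X j t := by
  obtain ⟨hC, hk0, hk, hX0, hderiv, hsum⟩ := hX
  have hIcc : Set.Icc s t ⊆ Set.Ico 0 T := fun x hx => ⟨hs.trans hx.1, lt_of_le_of_lt hx.2 ht⟩
  have hIoo : Set.Ioo s t ⊆ Set.Ioo 0 T := fun x hx => ⟨lt_of_le_of_lt hs hx.1, hx.2.trans ht⟩
  have hcont : ∀ n, 1 ≤ n → ContinuousOn (X n) (Set.Ico 0 T) := fun n hn x hx =>
    ((hderiv n hn x hx).differentiableWithinAt).continuousWithinAt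
  set g : ℝ → ℝ := fun u => k j * X (j + 1) u with hgdef
  have hgcont : ContinuousOn g (Set.Ico 0 T) :=
    continuousOn_const.mul (hcont (j + 1) (by omega))
  have hIooT : Set.Ioo 0 T ⊆ Set.Ico 0 T := Set.Ioo_subset_Ico_self
  set G : ℝ → ℝ := fun u => ∫ v in s..u, g v with hGdef
  have huIcc : Set.uIcc s t = Set.Icc s t := Set.uIcc_of_le hst
  have hgint : IntegrableOn g (Set.uIcc s t) := by
    rw [huIcc]
    exact (hgcont.mono hIcc).integrableOn_compact isCompact_Icc
  have hGcont : ContinuousOn G (Set.Icc s t) := by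
    have := intervalIntegral.continuousOn_primitive_interval hgint
    rwa [huIcc] at this
  set c : ℝ → ℝ := fun u => k (j - 1) * X (j - 1) u ^ 2 with hcdef
  have hcnonneg : ∀ u, 0 ≤ c u := by
    intro u
    rcases Nat.lt_or_ge j 2 with h2 | h2
    · interval_cases j
      simp [hcdef, hk0]
    · exact mul_nonneg (hk (j - 1) (by omega)).1 (sq_nonneg _)
  set F : ℝ → ℝ := fun u => X j u * Real.exp (G u) with hFdef
  have hFcont : ContinuousOn F (Set.Icc s t) :=
    ((hcont j hj).mono hIcc).mul (Real.continuous_exp.comp_continuousOn hGcont)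
  -- derivative of F on the interior
  have hFderiv : ∀ u ∈ Set.Ioo s t, HasDerivAt F (c u * Real.exp (G u)) u := by
    intro u hu
    have huT : u ∈ Set.Ioo 0 T := hIoo hu
    have hnhds : Set.Ico 0 T ∈ 𝓝 u := mem_nhds_iff.mpr ⟨Set.Ioo 0 T, hIooT, isOpen_Ioo, huT⟩
    have hXj : HasDerivAt (X j) (c u - g u * X j u) u := by
      have := (hderiv j hj u (hIooT huT)).hasDerivAt hnhds
      refine this.congr_deriv ?_
      simp [hcdef, hgdef]; ring
    have hGd : HasDerivAt G (g u) u := by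
      refine intervalIntegral.integral_hasDerivAt_right ?_ ?_ ?_
      · have hsu : Set.uIcc s u ⊆ Set.Ico 0 T := by
          rw [Set.uIcc_of_le hu.1.le]
          exact (Set.Icc_subset_Icc le_rfl hu.2.le).trans hIcc
        exact (hgcont.mono hsu).intervalIntegrable
      · exact (hgcont.mono hIooT).stronglyMeasurableAtFilter isOpen_Ioo u huT
      · exact (hgcont.mono hIooT).continuousAt (isOpen_Ioo.mem_nhds huT)
    have := hXj.mul ((hGd.exp))
    refine this.congr_deriv ?_
    ring
  have hmono : MonotoneOn F (Set.Icc s t) := by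
    refine monotoneOn_of_deriv_nonneg (convex_Icc s t) hFcont ?_ ?_
    · rw [interior_Icc]
      exact fun u hu => (hFderiv u hu).differentiableAt.differentiableWithinAt
    · rw [interior_Icc]
      intro u hu
      rw [(hFderiv u hu).deriv]
      exact mul_nonneg (hcnonneg u) (Real.exp_pos _).le
  have hFs : F s = X j s := by simp [hFdef, hGdef]
  have h0 : 0 ≤ F t := by
    have := hmono ⟨le_rfl, hst⟩ ⟨hst, le_rfl⟩ hst
    rw [hFs] at this
    exact hsign.trans this
  have h1 : 0 ≤ X j t * Real.exp (G t) := h0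
  nlinarith [Real.exp_pos (G t)]
end

section
/- Let X be a solution of the inviscid dyadic model on [0,T) and let 0 ≤ s ≤ t < T. If X(s) ∈ H_+, i.e. X_n(s) < 0 for at most finitely many n, then X(t) ∈ H_+; in other words, the set H_+ is invariant under the flow of the dyadic model. -/
open MeasureTheory Set Filter Topology

theorem sign_preserved
    (C : ℝ) (k : ℕ → ℝ) (X : ℕ → ℝ → ℝ) (T : ℝ)
    (hX : IsDyadicSolutionOn C k X (Set.Ico 0 T))
    (s t : ℝ) (hs : 0 ≤ s) (hst : s ≤ t) (ht : t < T)
    (n : ℕ) (hn : 1 ≤ n) (hXns : 0 ≤ X n s) : 0 ≤ X n t := by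
  obtain ⟨hC, hk0, hk, hX0, hderiv, hsum⟩ := hX
  -- Icc s t ⊆ Ico 0 T
  have hsub : Set.Icc s t ⊆ Set.Ico 0 T := fun u hu =>
    ⟨le_trans hs hu.1, lt_of_le_of_lt hu.2 ht⟩
  -- clamp
  set c : ℝ → ℝ := fun u => min (max u s) t with hc
  have hc_cont : Continuous c := (continuous_id.max continuous_const).min continuous_const
  have hc_mem : ∀ u, c u ∈ Set.Icc s t := fun u =>
    ⟨le_min (le_max_right u s) hst, min_le_right _ _⟩
  have hc_id : ∀ u ∈ Set.Icc s t, c u = u := fun u hu => by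
    simp [hc, max_eq_left hu.1, min_eq_left hu.2]
  -- continuity of components on Ico 0 T
  have hcontX : ∀ m : ℕ, ContinuousOn (X m) (Set.Ico 0 T) := by
    intro m
    rcases Nat.eq_zero_or_pos m with h0 | h1
    · subst h0
      exact continuousOn_const.congr fun u _ => hX0 u
    · exact fun u hu => (hderiv m h1 u hu).continuousWithinAt
  -- b : the coefficient, clamped, continuous on ℝ
  set b : ℝ → ℝ := fun u => k n * X (n + 1) (c u) with hb
  have hb_cont : Continuous b := by
    apply continuous_const.mul
    exact (hcontX (n + 1)).comp_continuous hc_cont fun u => hsub (hc_mem u)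
  set F : ℝ → ℝ := fun u => ∫ x in s..u, b x with hF
  have hF_deriv : ∀ u : ℝ, HasDerivAt F (b u) u := fun u =>
    intervalIntegral.integral_hasDerivAt_right (hb_cont.intervalIntegrable _ _)
      (hb_cont.stronglyMeasurableAtFilter _ _) hb_cont.continuousAt
  -- g
  set g : ℝ → ℝ := fun u => X n u * Real.exp (F u) with hg
  have hg_deriv : ∀ u ∈ Set.Ioo s t,
      HasDerivWithinAt g (Real.exp (F u) * (k (n - 1) * X (n - 1) u ^ 2)) (Set.Ioo s t) u := by
    intro u hu
    have huIcc : u ∈ Set.Icc s t := ⟨hu.1.le, hu.2.le⟩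
    have huIco : u ∈ Set.Ico 0 T := hsub huIcc
    have hmem : Set.Ico 0 T ∈ 𝓝 u :=
      mem_nhds_iff.2 ⟨Set.Ioo 0 T, Set.Ioo_subset_Ico_self, isOpen_Ioo,
        ⟨lt_of_le_of_lt hs hu.1, lt_trans hu.2 ht⟩⟩
    have hXn : HasDerivAt (X n)
        (k (n - 1) * X (n - 1) u ^ 2 - k n * X n u * X (n + 1) u) u :=
      (hderiv n hn u huIco).hasDerivAt hmem
    have hFu : HasDerivAt (fun v => Real.exp (F v)) (Real.exp (F u) * b u) u :=
      (hF_deriv u).exp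
    have := hXn.mul hFu
    have hbu : b u = k n * X (n + 1) u := by rw [hb]; simp only []; rw [hc_id u huIcc]
    refine (HasDerivAt.hasDerivWithinAt ?_)
    refine this.congr_deriv ?_
    rw [hbu]
    ring
  have hg_cont : ContinuousOn g (Set.Icc s t) := by
    apply ContinuousOn.mul
    · exact (hcontX n).mono hsub
    · have hFc : Continuous F := continuous_iff_continuousAt.mpr fun u => (hF_deriv u).continuousAt
      exact (Real.continuous_exp.comp hFc).continuousOn
  have hmono : MonotoneOn g (Set.Icc s t) := by
    apply monotoneOn_of_hasDerivWithinAt_nonneg (convex_Icc s t) hg_cont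
    · intro x hx
      rw [interior_Icc] at hx ⊢
      exact hg_deriv x hx
    · intro x hx
      have hkn1 : 0 ≤ k (n - 1) := by
        rcases Nat.lt_or_ge (n - 1) 1 with h | h
        · interval_cases h' : (n - 1) <;> simp [hk0]
        · exact (hk _ h).1
      positivity
  have hgs : 0 ≤ g s := by
    apply mul_nonneg hXns (Real.exp_nonneg _)
  have := hmono (Set.left_mem_Icc.2 hst) (Set.right_mem_Icc.2 hst) hst
  have hgt : 0 ≤ g t := le_trans hgs this
  have hexp : 0 < Real.exp (F t) := Real.exp_pos _
  by_contra hneg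
  push_neg at hneg
  have : g t < 0 := mul_neg_of_neg_of_pos hneg hexp
  linarith

/-- the set `H₊` of sequences with at most finitely many negative
components is invariant under the flow of the dyadic model. -/
theorem Hplus_invariant
    (C : ℝ) (k : ℕ → ℝ) (X : ℕ → ℝ → ℝ) (T : ℝ)
    (hX : IsDyadicSolutionOn C k X (Set.Ico 0 T))
    (s t : ℝ) (hs : 0 ≤ s) (hst : s ≤ t) (ht : t < T)
    (hfin : {n : ℕ | X n s < 0}.Finite) :
    {n : ℕ | X n t < 0}.Finite := by
  apply hfin.subset
  intro n hn
  simp only [Set.mem_setOf_eq] at hn ⊢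
  by_contra hcontra
  push_neg at hcontra
  rcases Nat.eq_zero_or_pos n with h0 | h1
  · subst h0
    rw [hX.2.2.2.1 t] at hn
    exact lt_irrefl 0 hn
  · exact absurd (sign_preserved C k X T hX s t hs hst ht n h1 hcontra) (not_le.2 hn)
end

section
/- Let X be a solution of the inviscid dyadic model on [0,T) with energy E, and let 0 ≤ s < t < T. If E(t) < E(s), then X(t) ∈ H_+, i.e. X_n(t) < 0 for at most finitely many n. In plain words: energy may decrease only in H_+. -/
open MeasureTheory Set Filter Topology

section Aux

variable {C : ℝ} {k : ℕ → ℝ} {X : ℕ → ℝ → ℝ} {T : ℝ}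

lemma dyadic_hasDerivAt (hX : IsDyadicSolutionOn C k X (Set.Ico 0 T))
    {n : ℕ} (hn : 1 ≤ n) {x : ℝ} (hx0 : 0 < x) (hxT : x < T) :
    HasDerivAt (X n) (k (n - 1) * X (n - 1) x ^ 2 - k n * X n x * X (n + 1) x) x :=
  (hX.2.2.2.2.1 n hn x ⟨hx0.le, hxT⟩).hasDerivAt (Ico_mem_nhds hx0 hxT)

lemma dyadic_contOn (hX : IsDyadicSolutionOn C k X (Set.Ico 0 T))
    (n : ℕ) {a b : ℝ} (ha : 0 ≤ a) (hb : b < T) :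
    ContinuousOn (X n) (Set.Icc a b) := by
  rcases Nat.eq_zero_or_pos n with rfl | hn
  · have hz : X 0 = fun _ => (0 : ℝ) := funext hX.2.2.2.1
    rw [hz]; exact continuousOn_const
  · intro x hx
    exact ((hX.2.2.2.2.1 n hn x ⟨ha.trans hx.1, lt_of_le_of_lt hx.2 hb⟩).continuousWithinAt).mono
      (fun y hy => ⟨ha.trans hy.1, lt_of_le_of_lt hy.2 hb⟩)

/-- Once a component is nonnegative, it stays nonnegative. -/
lemma dyadic_nonneg_prop (hX : IsDyadicSolutionOn C k X (Set.Ico 0 T))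
    {n : ℕ} (hn : 1 ≤ n) {a b : ℝ} (ha : 0 ≤ a) (hab : a ≤ b) (hb : b < T)
    (h0 : 0 ≤ X n a) : 0 ≤ X n b := by
  rcases eq_or_lt_of_le hab with rfl | hab'
  · exact h0
  have hk : 0 ≤ k n := (hX.2.2.1 n hn).1
  have hkm : 0 ≤ k (n - 1) := by
    rcases Nat.eq_zero_or_pos (n - 1) with h | h
    · rw [h, hX.2.1]
    · exact (hX.2.2.1 (n - 1) h).1
  set h : ℝ → ℝ := fun u => k n * X (n + 1) u with hh
  have hhcont : ContinuousOn h (Set.Icc a b) :=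
    continuousOn_const.mul (dyadic_contOn hX (n + 1) ha hb)
  set F : ℝ → ℝ := fun τ => ∫ u in a..τ, h u with hFdef
  have hint : IntegrableOn h (Set.Icc a b) volume :=
    hhcont.integrableOn_compact isCompact_Icc
  have hFcont : ContinuousOn F (Set.Icc a b) := by
    have := intervalIntegral.continuousOn_primitive_interval
      (μ := volume) (f := h) (a := a) (b := b) (by rwa [Set.uIcc_of_le hab])
    rwa [Set.uIcc_of_le hab] at this
  have hFd : ∀ x ∈ Set.Ioo a b, HasDerivAt F (h x) x := by
    intro x hx
    have hxIcc : Set.Icc a x ⊆ Set.Icc a b := Set.Icc_subset_Icc le_rfl hx.2.le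
    have hI : IntervalIntegrable h volume a x := by
      rw [intervalIntegrable_iff_integrableOn_Icc_of_le hx.1.le]
      exact hint.mono_set hxIcc
    have hcAt : ContinuousAt h x :=
      hhcont.continuousAt (Icc_mem_nhds hx.1 hx.2)
    exact intervalIntegral.integral_hasDerivAt_right hI
      ⟨Set.Ioo a b, Ioo_mem_nhds hx.1 hx.2,
        (hhcont.mono Set.Ioo_subset_Icc_self).aestronglyMeasurable measurableSet_Ioo⟩ hcAt
  set g : ℝ → ℝ := fun τ => X n τ * Real.exp (F τ) with hgdef
  have hgd : ∀ x ∈ Set.Ioo a b,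
      HasDerivAt g (k (n - 1) * X (n - 1) x ^ 2 * Real.exp (F x)) x := by
    intro x hx
    have hdX := dyadic_hasDerivAt hX hn (ha.trans_lt hx.1) (hx.2.trans hb)
    have hdE : HasDerivAt (fun τ => Real.exp (F τ)) (Real.exp (F x) * h x) x :=
      (hFd x hx).exp
    have := hdX.fun_mul hdE
    convert this using 1
    · rfl
    · rfl
    simp only [hh]
    ring
  have hgcont : ContinuousOn g (Set.Icc a b) :=
    (dyadic_contOn hX n ha hb).mul (Real.continuous_exp.comp_continuousOn hFcont)
  have hmono : MonotoneOn g (Set.Icc a b) := by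
    apply monotoneOn_of_deriv_nonneg (convex_Icc a b) hgcont
    · rw [interior_Icc]
      exact fun x hx => (hgd x hx).differentiableAt.differentiableWithinAt
    · rw [interior_Icc]
      intro x hx
      rw [(hgd x hx).deriv]
      positivity
  have hle := hmono (Set.left_mem_Icc.mpr hab) (Set.right_mem_Icc.mpr hab) hab
  have hga : g a = X n a := by
    simp [hgdef, hFdef, intervalIntegral.integral_same]
  rw [hga] at hle
  have hgb : g b = X n b * Real.exp (F b) := rfl
  have h1 : (0 : ℝ) * Real.exp (F b) ≤ X n b * Real.exp (F b) := by
    rw [zero_mul]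
    exact (h0.trans hle).trans_eq hgb
  exact le_of_mul_le_mul_right h1 (Real.exp_pos _)

/-- When `X (m+1) ≤ 0` on `[s,t]`, the partial energy `∑_{j<m} X_{j+1}²` is nondecreasing. -/
lemma partial_energy_le (hX : IsDyadicSolutionOn C k X (Set.Ico 0 T))
    {m : ℕ} (hm : 1 ≤ m) {s t : ℝ} (hs : 0 ≤ s) (hst : s ≤ t) (ht : t < T)
    (hneg : ∀ τ ∈ Set.Icc s t, X (m + 1) τ ≤ 0) :
    ∑ j ∈ Finset.range m, X (j + 1) s ^ 2 ≤ ∑ j ∈ Finset.range m, X (j + 1) t ^ 2 := by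
  set G : ℝ → ℝ := fun τ => ∑ j ∈ Finset.range m, X (j + 1) τ ^ 2 with hGdef
  set f : ℝ → ℕ → ℝ := fun x j => 2 * k j * X j x ^ 2 * X (j + 1) x with hfdef
  have hGd : ∀ x ∈ Set.Ioo s t, HasDerivAt G (-(f x m)) x := by
    intro x hx
    have hterm : ∀ j ∈ Finset.range m,
        HasDerivAt (fun τ => X (j + 1) τ ^ 2) (f x j - f x (j + 1)) x := by
      intro j _
      have hd := dyadic_hasDerivAt hX (Nat.le_add_left 1 j) (hs.trans_lt hx.1) (hx.2.trans ht)
      have := hd.fun_pow 2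
      convert this using 1
      · rfl
      · rfl
      simp only [hfdef, Nat.add_sub_cancel, pow_one]
      push_cast
      ring
    have hsum := HasDerivAt.fun_sum hterm
    have : ∑ j ∈ Finset.range m, (f x j - f x (j + 1)) = -(f x m) := by
      rw [Finset.sum_range_sub' (f x) m]
      simp [hfdef, hX.2.1]
    rwa [this] at hsum
  have hGcont : ContinuousOn G (Set.Icc s t) := by
    apply continuousOn_finset_sum
    intro j _
    exact (dyadic_contOn hX (j + 1) hs ht).pow 2
  have hmono : MonotoneOn G (Set.Icc s t) := by
    apply monotoneOn_of_deriv_nonneg (convex_Icc s t) hGcont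
    · rw [interior_Icc]
      exact fun x hx => (hGd x hx).differentiableAt.differentiableWithinAt
    · rw [interior_Icc]
      intro x hx
      rw [(hGd x hx).deriv]
      have hk : 0 ≤ k m := (hX.2.2.1 m hm).1
      have hXm : X (m + 1) x ≤ 0 := hneg x ⟨hx.1.le, hx.2.le⟩
      have h1 : 0 ≤ 2 * k m * X m x ^ 2 := by positivity
      have := mul_nonpos_of_nonneg_of_nonpos h1 hXm
      simp only [hfdef]
      linarith
  exact hmono (Set.left_mem_Icc.mpr hst) (Set.right_mem_Icc.mpr hst) hst

end Aux

/-- energy may decrease only in `H₊`: if `E(t) < E(s)` then `X(t) ∈ H₊`. -/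
theorem energy_decrease_only_in_Hplus
    (C : ℝ) (k : ℕ → ℝ) (X : ℕ → ℝ → ℝ) (T : ℝ)
    (hX : IsDyadicSolutionOn C k X (Set.Ico 0 T))
    (s t : ℝ) (hs : 0 ≤ s) (hst : s < t) (ht : t < T)
    (hE : energy X t < energy X s) :
    {n : ℕ | X n t < 0}.Finite := by
  by_contra hfin
  have hsum_t := hX.2.2.2.2.2 t ⟨hs.trans hst.le, ht⟩
  have hsum_s := hX.2.2.2.2.2 s ⟨hs, hst.trans ht⟩
  have key : ∀ N : ℕ, ∑ j ∈ Finset.range N, X (j + 1) s ^ 2 ≤ energy X t := by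
    intro N
    have hex : ∃ n ∈ {n : ℕ | X n t < 0}, N + 1 < n := by
      by_contra hcon
      push_neg at hcon
      exact hfin ((Set.finite_Iic (N + 1)).subset hcon)
    obtain ⟨n, hnS, hn⟩ := hex
    have hn1 : 1 ≤ n := by omega
    have hneg : ∀ τ ∈ Set.Icc s t, X n τ ≤ 0 := by
      intro τ hτ
      by_contra hpos
      push_neg at hpos
      exact absurd (dyadic_nonneg_prop hX hn1 (hs.trans hτ.1) hτ.2 ht hpos.le)
        (not_le.mpr hnS)
    obtain ⟨m, rfl⟩ : ∃ m, n = m + 1 := ⟨n - 1, by omega⟩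
    have hm1 : 1 ≤ m := by omega
    have h1 := partial_energy_le hX hm1 hs hst.le ht hneg
    have h2 : ∑ j ∈ Finset.range N, X (j + 1) s ^ 2 ≤ ∑ j ∈ Finset.range m, X (j + 1) s ^ 2 :=
      Finset.sum_le_sum_of_subset_of_nonneg (Finset.range_subset_range.mpr (by omega))
        (fun i _ _ => sq_nonneg _)
    have h3 : ∑ j ∈ Finset.range m, X (j + 1) t ^ 2 ≤ energy X t :=
      Summable.sum_le_tsum _ (fun i _ => sq_nonneg _) hsum_t
    linarith
  have : energy X s ≤ energy X t :=
    le_of_tendsto hsum_s.hasSum.tendsto_sum_nat (Filter.Eventually.of_forall key)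
  linarith
end

section
/- Let X be a solution of the inviscid dyadic model on [0,T) with energy E, and let 0 ≤ s < t < T. If E(t) > E(s), then X(s) ∉ H_+, i.e. X_n(s) < 0 for infinitely many n. In plain words: energy may increase only outside H_+. -/
open MeasureTheory Set Filter Topology

/-- energy may increase only outside `H₊`: if `E(t) > E(s)` then
`X_n(s) < 0` for infinitely many `n`. -/
theorem energy_increase_only_outside_Hplus
    (C : ℝ) (k : ℕ → ℝ) (X : ℕ → ℝ → ℝ) (T : ℝ)
    (hX : IsDyadicSolutionOn C k X (Set.Ico 0 T))
    (s t : ℝ) (hs : 0 ≤ s) (hst : s < t) (ht : t < T)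
    (hE : energy X s < energy X t) :
    ¬ {n : ℕ | X n s < 0}.Finite := by
  intro hfin
  obtain ⟨-, hk0, hk, hX0, hode, hsum⟩ := hX
  have hsD : s ∈ Set.Ico 0 T := ⟨hs, hst.trans ht⟩
  have htD : t ∈ Set.Ico 0 T := ⟨hs.trans hst.le, ht⟩
  have hsub : Set.Icc s t ⊆ Set.Ico 0 T := fun r hr => ⟨hs.trans hr.1, lt_of_le_of_lt hr.2 ht⟩
  have hcont : ∀ m, 1 ≤ m → ContinuousOn (X m) (Set.Ico 0 T) :=
    fun m hm r hr => (hode m hm r hr).continuousWithinAt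
  have hknn : ∀ m : ℕ, 0 ≤ k m := by
    intro m
    rcases Nat.eq_zero_or_pos m with h | h
    · rw [h, hk0]
    · exact (hk m h).1
  -- choose N0 beyond all negative components at time s
  obtain ⟨M, hM⟩ := hfin.bddAbove
  have hN0 : ∀ n, M + 1 ≤ n → 0 ≤ X n s := by
    intro n hn
    by_contra h
    push_neg at h
    have := hM (show n ∈ {m : ℕ | X m s < 0} from h)
    omega
  -- positivity propagation: if X n s ≥ 0 then X n stays ≥ 0 on [s,t]
  have hpos : ∀ n, 1 ≤ n → 0 ≤ X n s → ∀ r ∈ Set.Icc s t, 0 ≤ X n r := by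
    intro n hn hns
    set gext : ℝ → ℝ :=
      Set.IccExtend hst.le ((Set.Icc s t).restrict fun r => k n * X (n + 1) r) with hgext
    have hcg : Continuous gext := by
      apply Continuous.Icc_extend'
      exact ContinuousOn.restrict <|
        continuousOn_const.mul ((hcont (n + 1) (by omega)).mono hsub)
    have hgval : ∀ r ∈ Set.Icc s t, gext r = k n * X (n + 1) r := by
      intro r hr
      simp [hgext, Set.IccExtend_of_mem hst.le _ hr]
      rfl
    set G : ℝ → ℝ := fun r => ∫ u in s..r, gext u with hGdef
    have hGd : ∀ r : ℝ, HasDerivAt G (gext r) r := fun r =>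
      intervalIntegral.integral_hasDerivAt_right (hcg.intervalIntegrable _ _)
        (hcg.stronglyMeasurableAtFilter _ _) hcg.continuousAt
    have hGc : Continuous G := by
      rw [continuous_iff_continuousAt]
      exact fun r => (hGd r).continuousAt
    set y : ℝ → ℝ := fun r => X n r * Real.exp (G r) with hy
    have hy' : ∀ r ∈ interior (Set.Icc s t),
        HasDerivWithinAt y (Real.exp (G r) * (k (n - 1) * X (n - 1) r ^ 2))
          (interior (Set.Icc s t)) r := by
      intro r hr
      rw [interior_Icc] at hr
      have hrIcc : r ∈ Set.Icc s t := Set.Ioo_subset_Icc_self hr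
      have hrD : r ∈ Set.Ico 0 T := hsub hrIcc
      have h1 : HasDerivWithinAt (X n)
          (k (n - 1) * X (n - 1) r ^ 2 - k n * X n r * X (n + 1) r) (Set.Ioo s t) r :=
        (hode n hn r hrD).mono (Set.Ioo_subset_Icc_self.trans hsub)
      have h2 : HasDerivWithinAt (fun u => Real.exp (G u)) (Real.exp (G r) * gext r)
          (Set.Ioo s t) r := ((hGd r).exp).hasDerivWithinAt
      have h3 := h1.mul h2
      rw [interior_Icc]
      refine h3.congr_deriv ?_
      rw [hgval r hrIcc]
      ring
    have hyc : ContinuousOn y (Set.Icc s t) :=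
      ((hcont n hn).mono hsub).mul (hGc.rexp.continuousOn)
    have hmono : MonotoneOn y (Set.Icc s t) := by
      apply monotoneOn_of_hasDerivWithinAt_nonneg (convex_Icc s t) hyc hy'
      intro r _
      exact mul_nonneg (Real.exp_nonneg _) (mul_nonneg (hknn _) (sq_nonneg _))
    intro r hr
    have hsIcc : s ∈ Set.Icc s t := ⟨le_refl s, hst.le⟩
    have h1 : y s ≤ y r := hmono hsIcc hr hr.1
    have hys : y s = X n s := by
      have : G s = 0 := by simp [hGdef]
      simp [hy, this]
    have h2 : 0 ≤ y r := by rw [hys] at h1; linarith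
    have h3 : 0 < Real.exp (G r) := Real.exp_pos _
    by_contra hlt
    push_neg at hlt
    exact absurd h2 (not_le.mpr (mul_neg_of_neg_of_pos hlt h3))
  -- derivative of the truncated energy
  have hFder : ∀ N : ℕ, ∀ r ∈ Set.Ico 0 T,
      HasDerivWithinAt (fun u => ∑ j ∈ Finset.range N, X (j + 1) u ^ 2)
        (-2 * (k N * X N r ^ 2 * X (N + 1) r)) (Set.Ico 0 T) r := by
    intro N r hr
    have hterm : ∀ j : ℕ, HasDerivWithinAt (fun u => X (j + 1) u ^ 2)
        (2 * (k j * X j r ^ 2 * X (j + 1) r) - 2 * (k (j + 1) * X (j + 1) r ^ 2 * X (j + 2) r))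
        (Set.Ico 0 T) r := by
      intro j
      have h := (hode (j + 1) (by omega) r hr).pow 2
      simp only [Nat.add_sub_cancel] at h
      refine h.congr_deriv ?_
      ring
    have hsumd := HasDerivWithinAt.fun_sum (fun j (_ : j ∈ Finset.range N) => hterm j)
    refine hsumd.congr_deriv ?_
    rw [Finset.sum_range_sub' (fun j => 2 * (k j * X j r ^ 2 * X (j + 1) r))]
    rw [hk0, hX0 r]
    ring
  -- truncated energy is nonincreasing on [s,t] for large N
  have hF : ∀ N : ℕ, M + 1 ≤ N →
      (∑ j ∈ Finset.range N, X (j + 1) t ^ 2) ≤ ∑' j : ℕ, X (j + 1) s ^ 2 := by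
    intro N hN
    have hFc : ContinuousOn (fun u => ∑ j ∈ Finset.range N, X (j + 1) u ^ 2) (Set.Icc s t) := by
      apply continuousOn_finset_sum
      intro j _
      exact (((hcont (j + 1) (by omega)).mono hsub)).pow 2
    have hanti : AntitoneOn (fun u => ∑ j ∈ Finset.range N, X (j + 1) u ^ 2) (Set.Icc s t) := by
      apply antitoneOn_of_hasDerivWithinAt_nonpos (convex_Icc s t) hFc
        (f' := fun r => -2 * (k N * X N r ^ 2 * X (N + 1) r))
      · intro r hr
        rw [interior_Icc] at hr ⊢
        exact (hFder N r (hsub (Set.Ioo_subset_Icc_self hr))).mono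
          (Set.Ioo_subset_Icc_self.trans hsub)
      · intro r hr
        rw [interior_Icc] at hr
        have hrIcc : r ∈ Set.Icc s t := Set.Ioo_subset_Icc_self hr
        have hXN1 : 0 ≤ X (N + 1) r :=
          hpos (N + 1) (by omega) (hN0 (N + 1) (by omega)) r hrIcc
        nlinarith [hknn N, sq_nonneg (X N r), mul_nonneg (mul_nonneg (hknn N) (sq_nonneg (X N r))) hXN1]
    have h1 : (∑ j ∈ Finset.range N, X (j + 1) t ^ 2) ≤
        ∑ j ∈ Finset.range N, X (j + 1) s ^ 2 :=
      hanti ⟨le_refl s, hst.le⟩ ⟨hst.le, le_refl t⟩ hst.le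
    have h2 : (∑ j ∈ Finset.range N, X (j + 1) s ^ 2) ≤ ∑' j : ℕ, X (j + 1) s ^ 2 :=
      Summable.sum_le_tsum (Finset.range N) (fun j _ => sq_nonneg _) (hsum s hsD)
    linarith
  -- conclude: energy at t is at most energy at s
  have hEle : (∑' j : ℕ, X (j + 1) t ^ 2) ≤ ∑' j : ℕ, X (j + 1) s ^ 2 := by
    apply Summable.tsum_le_of_sum_le (hsum t htD)
    intro u
    set N : ℕ := M + 1 + (u.sup id + 1) with hNdef
    have hsubu : u ⊆ Finset.range N := by
      intro j hj
      have : j ≤ u.sup id := Finset.le_sup (f := id) hj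
      simp only [Finset.mem_range]
      omega
    have h1 : (∑ j ∈ u, X (j + 1) t ^ 2) ≤ ∑ j ∈ Finset.range N, X (j + 1) t ^ 2 :=
      Finset.sum_le_sum_of_subset_of_nonneg hsubu (fun j _ _ => sq_nonneg _)
    exact h1.trans (hF N (by omega))
  have : energy X t ≤ energy X s := hEle
  unfold energy at hE
  linarith
end

section
/- Let X be a solution of the inviscid dyadic model on [0,T) with X(0) ∈ H_+, i.e. X_n(0) < 0 for at most finitely many n. Then X is a Leray-Hopf solution: its energy E satisfies E(t) ≤ E(s) for all 0 ≤ s < t < T. -/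
open MeasureTheory Set Filter Topology

/-- Positivity propagation: if `X n 0 ≥ 0` then `X n` stays nonnegative on `[0,T)`. -/
lemma dyadic_nonneg (C : ℝ) (k : ℕ → ℝ) (X : ℕ → ℝ → ℝ) (T : ℝ)
    (hX : IsDyadicSolutionOn C k X (Set.Ico 0 T))
    {n : ℕ} (hn : 1 ≤ n) (h0 : 0 ≤ X n 0) :
    ∀ u ∈ Set.Ico (0 : ℝ) T, 0 ≤ X n u := by
  obtain ⟨hC, hk0, hk, hX0, hder, hsum⟩ := hX
  intro u hu
  rcases eq_or_lt_of_le hu.1 with h | h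
  · rwa [← h]
  have huT : u < T := hu.2
  -- nonnegativity of k (n-1)
  have hkn1 : 0 ≤ k (n - 1) := by
    rcases eq_or_lt_of_le hn with h1 | h1
    · simp [← h1, hk0]
    · exact (hk (n - 1) (by omega)).1
  -- continuity facts
  have hcontX : ∀ m : ℕ, 1 ≤ m → ContinuousOn (X m) (Set.Ico 0 T) :=
    fun m hm x hx => (hder m hm x hx).continuousWithinAt
  have hIccsub : Set.Icc (0 : ℝ) u ⊆ Set.Ico 0 T :=
    fun x hx => ⟨hx.1, lt_of_le_of_lt hx.2 huT⟩
  set f : ℝ → ℝ := fun x => k n * X (n + 1) x with hf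
  have hfIcc : ContinuousOn f (Set.Icc 0 u) :=
    continuousOn_const.mul ((hcontX (n + 1) (by omega)).mono hIccsub)
  have hfIoo : ContinuousOn f (Set.Ioo 0 T) :=
    continuousOn_const.mul ((hcontX (n + 1) (by omega)).mono Set.Ioo_subset_Ico_self)
  set F : ℝ → ℝ := fun v => ∫ x in (0 : ℝ)..v, f x with hF
  have hfint : IntervalIntegrable f volume 0 u := by
    apply ContinuousOn.intervalIntegrable
    rwa [Set.uIcc_of_le hu.1]
  have hFcont : ContinuousOn F (Set.Icc 0 u) := by
    have := intervalIntegral.continuousOn_primitive_interval' hfint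
      (a := 0) (by rw [Set.uIcc_of_le hu.1]; exact Set.left_mem_Icc.2 hu.1)
    rwa [Set.uIcc_of_le hu.1] at this
  set g : ℝ → ℝ := fun v => X n v * Real.exp (F v) with hg
  have hgcont : ContinuousOn g (Set.Icc 0 u) :=
    (((hcontX n hn).mono hIccsub)).mul (Real.continuous_exp.comp_continuousOn hFcont)
  -- derivative of g at interior points
  have hderg : ∀ x ∈ Set.Ioo (0 : ℝ) u,
      HasDerivAt g (Real.exp (F x) * (k (n - 1) * X (n - 1) x ^ 2)) x := by
    intro x hx
    have hxT : x ∈ Set.Ioo (0 : ℝ) T := ⟨hx.1, lt_trans hx.2 huT⟩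
    have hnhds : Set.Ico (0 : ℝ) T ∈ 𝓝 x :=
      mem_of_superset (isOpen_Ioo.mem_nhds hxT) Set.Ioo_subset_Ico_self
    have hdX : HasDerivAt (X n)
        (k (n - 1) * X (n - 1) x ^ 2 - k n * X n x * X (n + 1) x) x :=
      (hder n hn x ⟨hxT.1.le, hxT.2⟩).hasDerivAt hnhds
    have hdF : HasDerivAt F (f x) x := by
      refine intervalIntegral.integral_hasDerivAt_right ?_ ?_ ?_
      · apply ContinuousOn.intervalIntegrable
        apply hfIcc.mono
        rw [Set.uIcc_of_le hx.1.le]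
        exact Set.Icc_subset_Icc le_rfl hx.2.le
      · exact ContinuousOn.stronglyMeasurableAtFilter isOpen_Ioo hfIoo x hxT
      · exact hfIoo.continuousAt (isOpen_Ioo.mem_nhds hxT)
    have := hdX.fun_mul hdF.exp
    refine this.congr_deriv ?_
    simp only [hf]
    ring
  have hmono : MonotoneOn g (Set.Icc 0 u) := by
    apply monotoneOn_of_deriv_nonneg (convex_Icc 0 u) hgcont
    · intro x hx
      rw [interior_Icc] at hx
      exact (hderg x hx).differentiableAt.differentiableWithinAt
    · intro x hx
      rw [interior_Icc] at hx
      rw [(hderg x hx).deriv]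
      exact mul_nonneg (Real.exp_pos _).le (mul_nonneg hkn1 (sq_nonneg _))
  have h01 : g 0 ≤ g u :=
    hmono (Set.left_mem_Icc.2 hu.1) (Set.right_mem_Icc.2 hu.1) hu.1
  have hg0 : g 0 = X n 0 := by
    simp [hg, hF, intervalIntegral.integral_same]
  rw [hg0] at h01
  have hXnu : 0 ≤ X n u * Real.exp (F u) := le_trans h0 h01
  by_contra hneg
  push_neg at hneg
  nlinarith [Real.exp_pos (F u)]

/-- every solution with initial condition in `H₊` is a
Leray-Hopf solution. -/
theorem Hplus_initial_implies_LerayHopf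
    (C : ℝ) (k : ℕ → ℝ) (X : ℕ → ℝ → ℝ) (T : ℝ) (hT : 0 < T)
    (hX : IsDyadicSolutionOn C k X (Set.Ico 0 T))
    (hfin : {n : ℕ | X n 0 < 0}.Finite) :
    ∀ s ∈ Set.Ico (0 : ℝ) T, ∀ t ∈ Set.Ico (0 : ℝ) T, s < t →
      energy X t ≤ energy X s := by
  intro s hs t ht hst
  obtain ⟨hC, hk0, hk, hX0, hder, hsum⟩ := hX
  -- choose M beyond all negative initial components, M ≥ 1
  obtain ⟨M₀, hM₀⟩ := hfin.bddAbove
  set M : ℕ := M₀ + 1 with hM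
  have hM1 : 1 ≤ M := by omega
  have hnonneg : ∀ n : ℕ, M ≤ n → ∀ u ∈ Set.Ico (0 : ℝ) T, 0 ≤ X n u := by
    intro n hn
    have h0 : 0 ≤ X n 0 := by
      by_contra hneg
      push_neg at hneg
      have := hM₀ (Set.mem_setOf.2 hneg)
      omega
    exact dyadic_nonneg C k X T ⟨hC, hk0, hk, hX0, hder, hsum⟩ (by omega) h0
  -- partial sums
  set S : ℕ → ℝ → ℝ := fun N u => ∑ i ∈ Finset.range N, X (i + 1) u ^ 2 with hS
  set a : ℕ → ℝ → ℝ := fun i u => 2 * (k i * X i u ^ 2 * X (i + 1) u) with ha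
  have hSder : ∀ N : ℕ, ∀ u ∈ Set.Ico (0 : ℝ) T,
      HasDerivWithinAt (S N) (-(a N u)) (Set.Ico 0 T) u := by
    intro N u hu
    have h1 : HasDerivWithinAt (S N)
        (∑ i ∈ Finset.range N, (a i u - a (i + 1) u)) (Set.Ico 0 T) u := by
      apply HasDerivWithinAt.fun_sum
      intro i _
      have := (hder (i + 1) (by omega) u hu).fun_pow 2
      refine this.congr_deriv ?_
      simp only [ha, Nat.add_sub_cancel]
      ring
    have h2 : ∑ i ∈ Finset.range N, (a i u - a (i + 1) u) = a 0 u - a N u :=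
      Finset.sum_range_sub' (fun i => a i u) N
    have h3 : a 0 u = 0 := by simp [ha, hk0]
    rw [h2, h3, zero_sub] at h1
    exact h1
  have hIccsub : Set.Icc s t ⊆ Set.Ico 0 T :=
    fun x hx => ⟨le_trans hs.1 hx.1, lt_of_le_of_lt hx.2 ht.2⟩
  -- key step: partial sums decrease for N ≥ M
  have hstep : ∀ N : ℕ, M ≤ N → S N t ≤ S N s := by
    intro N hN
    have hanti : AntitoneOn (S N) (Set.Icc s t) := by
      apply antitoneOn_of_deriv_nonpos (convex_Icc s t)
      · exact fun x hx => ((hSder N x (hIccsub hx)).continuousWithinAt).mono hIccsub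
      · intro x hx
        rw [interior_Icc] at hx
        have hxT : x ∈ Set.Ioo (0 : ℝ) T :=
          ⟨lt_of_le_of_lt hs.1 hx.1, lt_trans hx.2 ht.2⟩
        have hnhds : Set.Ico (0 : ℝ) T ∈ 𝓝 x :=
          mem_of_superset (isOpen_Ioo.mem_nhds hxT) Set.Ioo_subset_Ico_self
        exact (((hSder N x ⟨hxT.1.le, hxT.2⟩).hasDerivAt hnhds)).differentiableAt.differentiableWithinAt
      · intro x hx
        rw [interior_Icc] at hx
        have hxT : x ∈ Set.Ioo (0 : ℝ) T :=
          ⟨lt_of_le_of_lt hs.1 hx.1, lt_trans hx.2 ht.2⟩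
        have hnhds : Set.Ico (0 : ℝ) T ∈ 𝓝 x :=
          mem_of_superset (isOpen_Ioo.mem_nhds hxT) Set.Ioo_subset_Ico_self
        have hd := (hSder N x ⟨hxT.1.le, hxT.2⟩).hasDerivAt hnhds
        rw [hd.deriv]
        have h1 : 0 ≤ a N x := by
          apply mul_nonneg (by norm_num)
          apply mul_nonneg (mul_nonneg (hk N (by omega)).1 (sq_nonneg _))
          exact hnonneg (N + 1) (by omega) x ⟨hxT.1.le, hxT.2⟩
        linarith
    exact hanti (Set.left_mem_Icc.2 hst.le) (Set.right_mem_Icc.2 hst.le) hst.le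
  -- pass to the limit
  have hht : Tendsto (fun N => S N t) atTop (𝓝 (energy X t)) :=
    (hsum t ht).hasSum.tendsto_sum_nat
  have hhs : Tendsto (fun N => S N s) atTop (𝓝 (energy X s)) :=
    (hsum s hs).hasSum.tendsto_sum_nat
  exact le_of_tendsto_of_tendsto hht hhs ((eventually_ge_atTop M).mono hstep)
end

section
/- Let X^(1) and X^(2) be two global solutions of the inviscid dyadic model with the same initial condition, set Z_n = X_n^(1) − X_n^(2), Y_n = X_n^(1) + X_n^(2), and define ψ_n(t) = Σ_{i=1}^n Z_i(t)^2 / 2^i. Then ψ_n(0) = 0 and for all n ≥ 1 and t ≥ 0, d/dt ψ_n(t) = −Σ_{i=1}^n k_i Y_{i+1}(t) Z_i(t)^2 / 2^i − (k_n/2^n) Y_n(t) Z_n(t) Z_{n+1}(t). -/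
open MeasureTheory Set Filter Topology

/-- for two global solutions with the same initial condition, the
weighted quantity `ψ_n(t) = ∑_{i=1}^n Z_i(t)²/2^i` satisfies `ψ_n(0) = 0` and
`d/dt ψ_n(t) = -∑_{i=1}^n k_i Y_{i+1} Z_i²/2^i - (k_n/2^n) Y_n Z_n Z_{n+1}`. -/
theorem psi_equation
    (C : ℝ) (k : ℕ → ℝ) (X₁ X₂ : ℕ → ℝ → ℝ)
    (h₁ : IsDyadicSolutionOn C k X₁ (Set.Ici 0))
    (h₂ : IsDyadicSolutionOn C k X₂ (Set.Ici 0))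
    (hinit : ∀ n : ℕ, X₁ n 0 = X₂ n 0)
    (Z Y : ℕ → ℝ → ℝ)
    (hZ : ∀ n t, Z n t = X₁ n t - X₂ n t)
    (hY : ∀ n t, Y n t = X₁ n t + X₂ n t)
    (ψ : ℕ → ℝ → ℝ)
    (hψ : ∀ n t, ψ n t = ∑ i ∈ Finset.range n, Z (i + 1) t ^ 2 / 2 ^ (i + 1)) :
    ∀ n : ℕ, 1 ≤ n →
      ψ n 0 = 0 ∧
      (∀ t ∈ Set.Ici (0 : ℝ),
        HasDerivWithinAt (ψ n)
          (-(∑ i ∈ Finset.range n,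
              k (i + 1) * Y (i + 2) t * Z (i + 1) t ^ 2 / 2 ^ (i + 1)) -
            k n / 2 ^ n * Y n t * Z n t * Z (n + 1) t)
          (Set.Ici 0) t) := by

  obtain ⟨hC, hk0, hk, hX10, hd1, hs1⟩ := h₁
  obtain ⟨-, -, -, hX20, hd2, hs2⟩ := h₂
  intro n hn
  constructor
  · rw [hψ]
    apply Finset.sum_eq_zero
    intro i _
    rw [hZ, hinit]
    simp
  · intro t ht
    have hψfun : ψ n = fun s => ∑ i ∈ Finset.range n, Z (i + 1) s ^ 2 / 2 ^ (i + 1) :=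
      funext (hψ n)
    rw [hψfun]
    set dZ : ℕ → ℝ := fun i =>
      (k i * X₁ i t ^ 2 - k (i + 1) * X₁ (i + 1) t * X₁ (i + 2) t)
      - (k i * X₂ i t ^ 2 - k (i + 1) * X₂ (i + 1) t * X₂ (i + 2) t) with hdZ
    have hZd : ∀ i : ℕ, HasDerivWithinAt (Z (i + 1)) (dZ i) (Set.Ici 0) t := by
      intro i
      have hZf : Z (i + 1) = fun s => X₁ (i + 1) s - X₂ (i + 1) s := funext fun s => hZ _ s
      rw [hZf, hdZ]
      have h1 := hd1 (i + 1) (by omega) t ht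
      have h2 := hd2 (i + 1) (by omega) t ht
      simp only [Nat.add_sub_cancel] at h1 h2
      exact h1.sub h2
    have hsummand : ∀ i : ℕ, HasDerivWithinAt (fun s => Z (i + 1) s ^ 2 / 2 ^ (i + 1))
        ((2 * Z (i + 1) t ^ 1 * dZ i) / 2 ^ (i + 1)) (Set.Ici 0) t := by
      intro i
      exact ((hZd i).pow 2).div_const _
    have hsum : HasDerivWithinAt (fun s => ∑ i ∈ Finset.range n, Z (i + 1) s ^ 2 / 2 ^ (i + 1))
        (∑ i ∈ Finset.range n, (2 * Z (i + 1) t ^ 1 * dZ i) / 2 ^ (i + 1)) (Set.Ici 0) t :=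
      HasDerivWithinAt.fun_sum fun i _ => hsummand i
    convert hsum using 1
    set A : ℕ → ℝ := fun i => k i * Y i t * Z i t * Z (i + 1) t / 2 ^ i with hA
    have key : ∀ i : ℕ, (2 * Z (i + 1) t ^ 1 * dZ i) / 2 ^ (i + 1)
        = -(k (i + 1) * Y (i + 2) t * Z (i + 1) t ^ 2 / 2 ^ (i + 1)) + (A i - A (i + 1)) := by
      intro i
      simp only [hA, hdZ, hZ, hY, pow_succ]
      ring
    have hA0 : A 0 = 0 := by simp [hA, hk0]
    have hAn : A n = k n / 2 ^ n * Y n t * Z n t * Z (n + 1) t := by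
      rw [hA]; ring
    calc -(∑ i ∈ Finset.range n, k (i + 1) * Y (i + 2) t * Z (i + 1) t ^ 2 / 2 ^ (i + 1))
          - k n / 2 ^ n * Y n t * Z n t * Z (n + 1) t
        = ∑ i ∈ Finset.range n, (-(k (i + 1) * Y (i + 2) t * Z (i + 1) t ^ 2 / 2 ^ (i + 1))
            + (A i - A (i + 1))) := by
          rw [Finset.sum_add_distrib, Finset.sum_range_sub' A n, Finset.sum_neg_distrib, hA0, hAn]
          ring
      _ = ∑ i ∈ Finset.range n, (2 * Z (i + 1) t ^ 1 * dZ i) / 2 ^ (i + 1) :=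
          Finset.sum_congr rfl fun i _ => (key i).symm
end
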